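/- arXiv:1310.5617 — 8 statements merged into one kernel-verified Lean document; each statement's English description precedes it below -/
import Mathlib

section
/- Fix T > 0, σ > 0, σ₀ ≥ 0 and s,t ∈ [0,T]. For θ ≠ 0 let c_θ(s,t) = (1/(2θ)) e^{−θ(s+t)} ((2θσ₀² − σ²) + σ² e^{2θ min(s,t)}) − (1/(2θ)) e^{−θT} (σ² e^{θt} + (2θσ₀² − σ²) e^{−θt})(σ² e^{θs} + (2θσ₀² − σ²) e^{−θs}) / (σ² e^{θT} + (2θσ₀² − σ²) e^{−θT}). Then as θ → 0 (θ ≠ 0), c_θ(s,t) converges to σ₀² + σ² min(s,t) − (σ₀² + σ² t)(σ₀² + σ² s)/(σ₀² + σ² T). -/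
open Real Set Filter

lemma aux_sinh_slope (u : ℝ) :
    Tendsto (fun θ : ℝ => (Real.exp (θ*u) - Real.exp (-(θ*u)))/(2*θ))
      (nhdsWithin 0 {0}ᶜ) (nhds u) := by
  have h1 : HasDerivAt (fun θ : ℝ => θ*u) u 0 := hasDerivAt_mul_const u
  have hd : HasDerivAt (fun θ : ℝ => Real.sinh (θ*u)) u 0 := by
    have h2 := (Real.hasDerivAt_sinh ((0:ℝ)*u)).comp 0 h1
    simpa [Function.comp_def] using h2
  have h3 := hasDerivAt_iff_tendsto_slope.mp hd
  refine h3.congr' ?_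
  filter_upwards [self_mem_nhdsWithin] with θ hθ
  have hθ' : θ ≠ 0 := hθ
  rw [slope_def_field]
  simp only [Real.sinh_eq, zero_mul, Real.exp_zero, sub_zero, neg_zero]
  field_simp
  ring

lemma aux_G_tendsto (σ σ₀ u : ℝ) :
    Tendsto (fun θ : ℝ => σ₀^2 * Real.exp (-(θ*u))
        + σ^2 * ((Real.exp (θ*u) - Real.exp (-(θ*u)))/(2*θ)))
      (nhdsWithin 0 {0}ᶜ) (nhds (σ₀^2 + σ^2 * u)) := by
  have h1 : Tendsto (fun θ : ℝ => σ₀^2 * Real.exp (-(θ*u))) (nhdsWithin 0 {0}ᶜ)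
      (nhds (σ₀^2)) := by
    have : Continuous (fun θ : ℝ => σ₀^2 * Real.exp (-(θ*u))) := by continuity
    have h2 := (this.tendsto 0).mono_left (nhdsWithin_le_nhds (s := {0}ᶜ))
    simpa using h2
  simpa using h1.add ((aux_sinh_slope u).const_mul (σ^2))

set_option maxHeartbeats 1000000 in
/-- as θ → 0 (θ ≠ 0), the Ornstein–Uhlenbeck bridge covariance
c_θ(s,t) converges to the Brownian bridge covariance with random initial value. -/
theorem ou_bridge_covariance_tendsto_theta_zero
    (T σ σ₀ s t : ℝ) (hT : 0 < T) (hσ : 0 < σ) (hσ₀ : 0 ≤ σ₀)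
    (hs : s ∈ Icc (0:ℝ) T) (ht : t ∈ Icc (0:ℝ) T) :
    Tendsto (fun θ : ℝ =>
      (1/(2*θ)) * Real.exp (-θ*(s+t)) *
        ((2*θ*σ₀^2 - σ^2) + σ^2 * Real.exp (2*θ*(min s t)))
      - (1/(2*θ)) * Real.exp (-θ*T) *
        ((σ^2 * Real.exp (θ*t) + (2*θ*σ₀^2 - σ^2) * Real.exp (-θ*t)) *
         (σ^2 * Real.exp (θ*s) + (2*θ*σ₀^2 - σ^2) * Real.exp (-θ*s))) /
        (σ^2 * Real.exp (θ*T) + (2*θ*σ₀^2 - σ^2) * Real.exp (-θ*T)))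
      (nhdsWithin 0 {0}ᶜ)
      (nhds (σ₀^2 + σ^2 * (min s t)
        - (σ₀^2 + σ^2 * t) * (σ₀^2 + σ^2 * s) / (σ₀^2 + σ^2 * T))) := by
  set m := min s t with hm
  set G : ℝ → ℝ → ℝ := fun u θ => σ₀^2 * Real.exp (-(θ*u))
      + σ^2 * ((Real.exp (θ*u) - Real.exp (-(θ*u)))/(2*θ)) with hG
  -- limit of the regular expression
  have hGT_pos : (0:ℝ) < σ₀^2 + σ^2 * T := by positivity
  have hlim : Tendsto (fun θ : ℝ =>
      Real.exp (-θ*(s+t)) * (σ₀^2 + σ^2 * Real.exp (θ*m) *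
        ((Real.exp (θ*m) - Real.exp (-(θ*m)))/(2*θ)))
      - Real.exp (-θ*T) * (G t θ * G s θ) / G T θ)
      (nhdsWithin 0 {0}ᶜ)
      (nhds (σ₀^2 + σ^2 * m
        - (σ₀^2 + σ^2 * t) * (σ₀^2 + σ^2 * s) / (σ₀^2 + σ^2 * T))) := by
    have hexp : ∀ c : ℝ, Tendsto (fun θ : ℝ => Real.exp (-θ*c)) (nhdsWithin 0 {0}ᶜ)
        (nhds 1) := by
      intro c
      have : Continuous (fun θ : ℝ => Real.exp (-θ*c)) := by continuity
      have h2 := (this.tendsto 0).mono_left (nhdsWithin_le_nhds (s := {0}ᶜ))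
      simpa using h2
    have hexpm : Tendsto (fun θ : ℝ => Real.exp (θ*m)) (nhdsWithin 0 {0}ᶜ)
        (nhds 1) := by
      have : Continuous (fun θ : ℝ => Real.exp (θ*m)) := by continuity
      have h2 := (this.tendsto 0).mono_left (nhdsWithin_le_nhds (s := {0}ᶜ))
      simpa using h2
    have h1 : Tendsto (fun θ : ℝ =>
        Real.exp (-θ*(s+t)) * (σ₀^2 + σ^2 * Real.exp (θ*m) *
          ((Real.exp (θ*m) - Real.exp (-(θ*m)))/(2*θ))))
        (nhdsWithin 0 {0}ᶜ) (nhds (σ₀^2 + σ^2 * m)) := by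
      have hc : Tendsto (fun _ : ℝ => σ₀^2) (nhdsWithin (0:ℝ) {0}ᶜ) (nhds (σ₀^2)) :=
        tendsto_const_nhds
      have := (hexp (s+t)).mul
        (hc.add (((hexpm.mul (aux_sinh_slope m))).const_mul (σ^2)))
      simpa [mul_assoc] using this
    have h2 : Tendsto (fun θ : ℝ => Real.exp (-θ*T) * (G t θ * G s θ) / G T θ)
        (nhdsWithin 0 {0}ᶜ)
        (nhds ((σ₀^2 + σ^2 * t) * (σ₀^2 + σ^2 * s) / (σ₀^2 + σ^2 * T))) := by
      have := ((hexp T).mul ((aux_G_tendsto σ σ₀ t).mul (aux_G_tendsto σ σ₀ s))).div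
        (aux_G_tendsto σ σ₀ T) hGT_pos.ne'
      rw [one_mul] at this
      exact this
    exact h1.sub h2
  refine hlim.congr' ?_
  have hGTne : ∀ᶠ θ in nhdsWithin (0:ℝ) {0}ᶜ, G T θ ≠ 0 :=
    (aux_G_tendsto σ σ₀ T).eventually_ne hGT_pos.ne'
  filter_upwards [self_mem_nhdsWithin, hGTne] with θ hθ hGT
  have hθ' : θ ≠ 0 := hθ
  have hD : σ^2 * Real.exp (θ*T) + (2*θ*σ₀^2 - σ^2) * Real.exp (-θ*T)
      = 2*θ * G T θ := by
    simp only [hG, neg_mul]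
    field_simp
    ring
  have hPt : σ^2 * Real.exp (θ*t) + (2*θ*σ₀^2 - σ^2) * Real.exp (-θ*t)
      = 2*θ * G t θ := by
    simp only [hG, neg_mul]
    field_simp
    ring
  have hPs : σ^2 * Real.exp (θ*s) + (2*θ*σ₀^2 - σ^2) * Real.exp (-θ*s)
      = 2*θ * G s θ := by
    simp only [hG, neg_mul]
    field_simp
    ring
  have hem : Real.exp (2*θ*m) = Real.exp (θ*m) * Real.exp (θ*m) := by
    rw [← Real.exp_add]; ring_nf
  have hem2 : Real.exp (θ*m) * Real.exp (-(θ*m)) = 1 := by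
    rw [← Real.exp_add]; simp
  rw [hD, hPt, hPs, hem, show Real.exp (-(θ*m)) = (Real.exp (θ*m))⁻¹ from Real.exp_neg _]
  have h2θ : (2:ℝ)*θ ≠ 0 := by simp [hθ']
  field_simp
  ring
end

section
/- Fix T > 0, σ > 0, σ₀ ≥ 0 and θ ≠ 0, and let c be the Ornstein–Uhlenbeck bridge covariance. Then c is symmetric, i.e. c(s,t) = c(t,s) for all s,t ∈ [0,T], and c is a positive semidefinite kernel: for every continuous function f : [0,T] → ℝ one has ∫₀ᵀ ∫₀ᵀ c(s,t) f(s) f(t) ds dt ≥ 0. -/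
open Real Set intervalIntegral

noncomputable def Hou (σ σ₀ θ : ℝ) : ℝ → ℝ :=
  fun x => σ₀^2 + σ^2/(2*θ) * (Real.exp (2*θ*x) - 1)

lemma Hou_cont (σ σ₀ θ : ℝ) : Continuous (Hou σ σ₀ θ) := by
  unfold Hou; continuity

lemma Hou_zero (σ σ₀ θ : ℝ) : Hou σ σ₀ θ 0 = σ₀^2 := by
  simp [Hou]

lemma Hou_pos (σ σ₀ θ T : ℝ) (hT : 0 < T) (hσ : 0 < σ) (hσ₀ : 0 ≤ σ₀) (hθ : θ ≠ 0) :
    0 < Hou σ σ₀ θ T := by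
  have hx : (2*θ*T) ≠ 0 := by
    simp only [mul_ne_zero_iff]; exact ⟨⟨two_ne_zero, hθ⟩, hT.ne'⟩
  have hratio : 0 < (Real.exp (2*θ*T) - 1) / (2*θ*T) := by
    rcases lt_or_gt_of_ne hx with h | h
    · apply div_pos_of_neg_of_neg
      · have := Real.exp_lt_one_iff.mpr h; linarith
      · exact h
    · apply div_pos
      · have := Real.add_one_lt_exp (x := 2*θ*T) (ne_of_gt h); linarith
      · exact h
  have h1 : Hou σ σ₀ θ T = σ₀^2 + (σ^2 * T) * ((Real.exp (2*θ*T) - 1) / (2*θ*T)) := by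
    unfold Hou; field_simp
  rw [h1]
  have h2 : 0 < (σ^2 * T) * ((Real.exp (2*θ*T) - 1) / (2*θ*T)) := by positivity
  positivity

lemma Hou_deriv (σ σ₀ θ : ℝ) (hθ : θ ≠ 0) (u : ℝ) :
    HasDerivAt (Hou σ σ₀ θ) (σ^2 * Real.exp (2*θ*u)) u := by
  have h1 : HasDerivAt (fun x : ℝ => Real.exp (2*θ*x)) (Real.exp (2*θ*u) * (2*θ)) u := by
    simpa using ((hasDerivAt_id u).const_mul (2*θ)).exp
  have h2 := ((h1.sub_const 1).const_mul (σ^2/(2*θ))).const_add (σ₀^2)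
  refine h2.congr_deriv ?_
  have h2θ : (2*θ) ≠ 0 := mul_ne_zero two_ne_zero hθ
  field_simp

lemma gfact (σ σ₀ θ : ℝ) (hθ : θ ≠ 0) (x : ℝ) :
    σ^2 * Real.exp (θ*x) + (2*θ*σ₀^2 - σ^2) * Real.exp (-θ*x)
      = 2*θ * Real.exp (-θ*x) * Hou σ σ₀ θ x := by
  have key : Real.exp (θ*x) = Real.exp (-θ*x) * Real.exp (2*θ*x) := by
    rw [← Real.exp_add]; ring_nf
  rw [key]
  unfold Hou
  field_simp
  ring

lemma ou_aux (T σ σ₀ θ : ℝ) (hT : 0 < T) (hσ : 0 < σ) (hσ₀ : 0 ≤ σ₀) (hθ : θ ≠ 0)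
    (f : ℝ → ℝ) (hf : Continuous f) :
    0 ≤ ∫ s in (0:ℝ)..T, ∫ t in (0:ℝ)..T,
      (Real.exp (-θ*s) * Real.exp (-θ*t) *
        (Hou σ σ₀ θ (min s t) - Hou σ σ₀ θ s * Hou σ σ₀ θ t / Hou σ σ₀ θ T)) * f s * f t := by
  have hHc : Continuous (Hou σ σ₀ θ) := Hou_cont σ σ₀ θ
  have hHT : 0 < Hou σ σ₀ θ T := Hou_pos σ σ₀ θ T hT hσ hσ₀ hθ
  set H := Hou σ σ₀ θ with hHdef
  set φ : ℝ → ℝ := fun t => Real.exp (-θ*t) * f t with hφdef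
  have hφc : Continuous φ := by fun_prop
  have hφHc : Continuous (fun t => φ t * H t) := hφc.mul hHc
  set Φ : ℝ → ℝ := fun u => ∫ t in u..T, φ t with hΦdef
  set P : ℝ → ℝ := fun u => ∫ t in (0:ℝ)..u, φ t * H t with hPdef
  set C : ℝ := P T / H T with hCdef
  have hΦd : ∀ u, HasDerivAt Φ (-(φ u)) u := fun u =>
    intervalIntegral.integral_hasDerivAt_left (hφc.intervalIntegrable _ _)
      (hφc.stronglyMeasurableAtFilter _ _) hφc.continuousAt
  have hPd : ∀ u, HasDerivAt P (φ u * H u) u := fun u =>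
    intervalIntegral.integral_hasDerivAt_right (hφHc.intervalIntegrable _ _)
      (hφHc.stronglyMeasurableAtFilter _ _) hφHc.continuousAt
  have hΦc : Continuous Φ := Differentiable.continuous (fun u => (hΦd u).differentiableAt)
  have hPc : Continuous P := Differentiable.continuous (fun u => (hPd u).differentiableAt)
  set Ψ : ℝ → ℝ := fun u => Φ u - C with hΨdef
  have hΨd : ∀ u, HasDerivAt Ψ (-(φ u)) u := fun u => (hΦd u).sub_const C
  have hΨc : Continuous Ψ := hΦc.sub continuous_const
  set F : ℝ → ℝ := fun s => P s * Ψ s + H s * Ψ s ^ 2 with hFdef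
  set G : ℝ → ℝ := fun s => φ s * (P s + H s * Ψ s) with hGdef
  set A : ℝ → ℝ := fun s => σ^2 * Real.exp (2*θ*s) * Ψ s ^ 2 with hAdef
  have hFd : ∀ s, HasDerivAt F (A s - G s) s := by
    intro s
    have h1 := (hPd s).mul (hΨd s)
    have h2 := (Hou_deriv σ σ₀ θ hθ s).mul ((hΨd s).pow 2)
    have h3 := h1.add h2
    refine h3.congr_deriv ?_
    simp only [hAdef, hGdef, Pi.pow_apply]
    push_cast
    ring
  have hAc : Continuous A := by
    apply Continuous.mul _ (hΨc.pow 2)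
    fun_prop
  have hGc : Continuous G := hφc.mul (hPc.add (hHc.mul hΨc))
  have hFTC : ∫ s in (0:ℝ)..T, (A s - G s) = F T - F 0 :=
    intervalIntegral.integral_eq_sub_of_hasDerivAt (fun s _ => hFd s)
      ((hAc.sub hGc).intervalIntegrable _ _)
  have hsplit : ∫ s in (0:ℝ)..T, (A s - G s)
      = (∫ s in (0:ℝ)..T, A s) - ∫ s in (0:ℝ)..T, G s :=
    intervalIntegral.integral_sub (hAc.intervalIntegrable _ _) (hGc.intervalIntegrable _ _)
  have hΦT : Φ T = 0 := intervalIntegral.integral_same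
  have hPT : P T = C * H T := by rw [hCdef]; field_simp
  have hP0 : P 0 = 0 := intervalIntegral.integral_same
  have hFT : F T = 0 := by simp only [hFdef, hΨdef, hΦT, hPT]; ring
  have hF0 : F 0 = σ₀^2 * Ψ 0 ^ 2 := by
    simp only [hFdef]; rw [hP0, hHdef, Hou_zero]; ring
  have hG : (∫ s in (0:ℝ)..T, G s) = σ₀^2 * Ψ 0 ^ 2 + ∫ s in (0:ℝ)..T, A s := by
    rw [hsplit, hFT, hF0] at hFTC; linarith
  have hinner : ∀ s ∈ Icc (0:ℝ) T,
      (∫ t in (0:ℝ)..T, (Real.exp (-θ*s) * Real.exp (-θ*t) *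
        (H (min s t) - H s * H t / H T)) * f s * f t) = G s := by
    intro s hs
    have e1 : ∀ t, (Real.exp (-θ*s) * Real.exp (-θ*t) *
        (H (min s t) - H s * H t / H T)) * f s * f t
        = φ s * (φ t * H (min s t) - (H s / H T) * (φ t * H t)) := by
      intro t; simp only [hφdef]; ring
    simp only [e1]
    have hmint : Continuous (fun t => φ t * H (min s t)) :=
      hφc.mul (hHc.comp (continuous_const.min continuous_id))
    rw [intervalIntegral.integral_const_mul]
    rw [intervalIntegral.integral_sub (hmint.intervalIntegrable _ _)
        ((hφHc.intervalIntegrable _ _).const_mul (H s / H T))]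
    rw [intervalIntegral.integral_const_mul]
    have hadj : (∫ t in (0:ℝ)..s, φ t * H (min s t)) + (∫ t in s..T, φ t * H (min s t))
        = ∫ t in (0:ℝ)..T, φ t * H (min s t) :=
      intervalIntegral.integral_add_adjacent_intervals
        (hmint.intervalIntegrable _ _) (hmint.intervalIntegrable _ _)
    have h01 : (∫ t in (0:ℝ)..s, φ t * H (min s t)) = P s := by
      simp only [hPdef]
      apply intervalIntegral.integral_congr
      intro t ht
      rw [uIcc_of_le hs.1] at ht
      show φ t * H (min s t) = φ t * H t
      rw [min_eq_right ht.2]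
    have h02 : (∫ t in s..T, φ t * H (min s t)) = H s * Φ s := by
      rw [show H s * Φ s = ∫ t in s..T, H s * φ t from
        (intervalIntegral.integral_const_mul _ _).symm]
      apply intervalIntegral.integral_congr
      intro t ht
      rw [uIcc_of_le hs.2] at ht
      show φ t * H (min s t) = H s * φ t
      rw [min_eq_left ht.1, mul_comm]
    rw [← hadj, h01, h02]
    have hPHT : (∫ t in (0:ℝ)..T, φ t * H t) = C * H T := hPT
    rw [hPHT]
    simp only [hGdef, hΨdef]
    field_simp
    ring
  have houter : (∫ s in (0:ℝ)..T, ∫ t in (0:ℝ)..T,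
      (Real.exp (-θ*s) * Real.exp (-θ*t) *
        (H (min s t) - H s * H t / H T)) * f s * f t) = ∫ s in (0:ℝ)..T, G s := by
    apply intervalIntegral.integral_congr
    intro s hs
    rw [uIcc_of_le hT.le] at hs
    exact hinner s hs
  rw [houter, hG]
  have hA0 : 0 ≤ ∫ s in (0:ℝ)..T, A s :=
    intervalIntegral.integral_nonneg hT.le (fun s _ => by simp only [hAdef]; positivity)
  have : 0 ≤ σ₀^2 * Ψ 0 ^ 2 := by positivity
  linarith

/-- the Ornstein–Uhlenbeck bridge covariance is symmetric and is a
positive semidefinite kernel on [0,T]. -/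
theorem ou_bridge_covariance_symm_posSemidef
    (T σ σ₀ θ : ℝ) (hT : 0 < T) (hσ : 0 < σ) (hσ₀ : 0 ≤ σ₀) (hθ : θ ≠ 0)
    (c : ℝ → ℝ → ℝ)
    (hc : ∀ s t : ℝ, c s t = (1/(2*θ)) * Real.exp (-θ*(s+t)) *
        ((2*θ*σ₀^2 - σ^2) + σ^2 * Real.exp (2*θ*(min s t)))
      - (1/(2*θ)) * Real.exp (-θ*T) *
        ((σ^2 * Real.exp (θ*t) + (2*θ*σ₀^2 - σ^2) * Real.exp (-θ*t)) *
         (σ^2 * Real.exp (θ*s) + (2*θ*σ₀^2 - σ^2) * Real.exp (-θ*s))) /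
        (σ^2 * Real.exp (θ*T) + (2*θ*σ₀^2 - σ^2) * Real.exp (-θ*T))) :
    (∀ s ∈ Icc (0:ℝ) T, ∀ t ∈ Icc (0:ℝ) T, c s t = c t s) ∧
    (∀ f : ℝ → ℝ, ContinuousOn f (Icc (0:ℝ) T) →
      0 ≤ ∫ s in (0:ℝ)..T, ∫ t in (0:ℝ)..T, c s t * f s * f t) := by
  have h2θ : (2*θ) ≠ 0 := mul_ne_zero two_ne_zero hθ
  have hHT : 0 < Hou σ σ₀ θ T := Hou_pos σ σ₀ θ T hT hσ hσ₀ hθ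
  have hc' : ∀ s t : ℝ, c s t = Real.exp (-θ*s) * Real.exp (-θ*t) *
      (Hou σ σ₀ θ (min s t) - Hou σ σ₀ θ s * Hou σ σ₀ θ t / Hou σ σ₀ θ T) := by
    intro s t
    rw [hc s t, gfact σ σ₀ θ hθ t, gfact σ σ₀ θ hθ s, gfact σ σ₀ θ hθ T]
    have hm : (2*θ*σ₀^2 - σ^2) + σ^2 * Real.exp (2*θ*(min s t))
        = 2*θ * Hou σ σ₀ θ (min s t) := by
      unfold Hou; field_simp; ring
    rw [hm]
    have hst : Real.exp (-θ*(s+t)) = Real.exp (-θ*s) * Real.exp (-θ*t) := by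
      rw [← Real.exp_add]; ring_nf
    rw [hst]
    have hE : Real.exp (-θ*T) ≠ 0 := Real.exp_ne_zero _
    field_simp
  constructor
  · intro s _ t _
    rw [hc s t, hc t s, min_comm t s, add_comm t s]
    ring
  · intro f hf
    set g : ℝ → ℝ := fun x => f (max 0 (min x T)) with hgdef
    have hproj : ∀ x : ℝ, max 0 (min x T) ∈ Icc (0:ℝ) T := fun x =>
      ⟨le_max_left _ _, max_le hT.le (min_le_right x T)⟩
    have hgc : Continuous g := by
      have : Continuous fun x : ℝ => max 0 (min x T) := continuous_const.max (continuous_id.min continuous_const)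
      exact hf.comp_continuous this hproj
    have hge : ∀ x ∈ Icc (0:ℝ) T, g x = f x := by
      intro x hx
      simp only [hgdef]
      rw [min_eq_left hx.2, max_eq_right hx.1]
    have heq : (∫ s in (0:ℝ)..T, ∫ t in (0:ℝ)..T, c s t * f s * f t)
        = ∫ s in (0:ℝ)..T, ∫ t in (0:ℝ)..T, c s t * g s * g t := by
      apply intervalIntegral.integral_congr
      intro s hs
      rw [uIcc_of_le hT.le] at hs
      show (∫ t in (0:ℝ)..T, c s t * f s * f t) = ∫ t in (0:ℝ)..T, c s t * g s * g t
      apply intervalIntegral.integral_congr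
      intro t ht
      rw [uIcc_of_le hT.le] at ht
      show c s t * f s * f t = c s t * g s * g t
      rw [hge s hs, hge t ht]
    rw [heq]
    have key := ou_aux T σ σ₀ θ hT hσ hσ₀ hθ g hgc
    simp only [hc']
    exact key
end

section
/- Fix T > 0, σ > 0, σ₀ ≥ 0 and θ ≠ 0, and let c be the Ornstein–Uhlenbeck bridge covariance. Let f : [0,T] → ℝ be continuous and define g(s) = ∫₀ᵀ c(s,t) f(t) dt. Then g is twice continuously differentiable on [0,T] and satisfies: (i) g''(s) − θ² g(s) = −σ² f(s) for all s ∈ [0,T]; (ii) g(T) = 0; (iii) σ₀² g'(0) = (σ² − θσ₀²) g(0). -/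
open Real Set intervalIntegral

noncomputable def ouU (σ σ₀ θ : ℝ) (x : ℝ) : ℝ :=
  σ^2 * Real.exp (θ*x) + (2*θ*σ₀^2 - σ^2) * Real.exp (-θ*x)

noncomputable def ouUp (σ σ₀ θ : ℝ) (x : ℝ) : ℝ :=
  θ * σ^2 * Real.exp (θ*x) - θ * (2*θ*σ₀^2 - σ^2) * Real.exp (-θ*x)

noncomputable def ouW (σ σ₀ θ T : ℝ) (x : ℝ) : ℝ :=
  Real.exp (-θ*x) - (Real.exp (-θ*T) / ouU σ σ₀ θ T) * ouU σ σ₀ θ x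

noncomputable def ouWp (σ σ₀ θ T : ℝ) (x : ℝ) : ℝ :=
  -θ * Real.exp (-θ*x) - (Real.exp (-θ*T) / ouU σ σ₀ θ T) * ouUp σ σ₀ θ x

lemma expinv (θ y : ℝ) : (Real.exp (-θ*y))⁻¹ = Real.exp (θ*y) := by
  rw [show -θ*y = -(θ*y) by ring, Real.exp_neg, inv_inv]

lemma ouU_ne (T σ σ₀ θ : ℝ) (hT : 0 < T) (hσ : 0 < σ) (hσ₀ : 0 ≤ σ₀) (hθ : θ ≠ 0) :
    ouU σ σ₀ θ T ≠ 0 := by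
  have h1 := Real.exp_pos (θ*T)
  have h2 := Real.exp_pos (-θ*T)
  rcases lt_or_gt_of_ne hθ with h | h
  · have hlt : Real.exp (θ*T) < Real.exp (-θ*T) := by
      apply Real.exp_lt_exp.mpr; nlinarith
    have : ouU σ σ₀ θ T < 0 := by
      unfold ouU
      nlinarith [mul_pos (pow_pos hσ 2) (sub_pos.mpr hlt),
        mul_nonneg (mul_nonneg (neg_nonneg.mpr h.le) (sq_nonneg σ₀)) h2.le]
    exact ne_of_lt this
  · have hlt : Real.exp (-θ*T) < Real.exp (θ*T) := by
      apply Real.exp_lt_exp.mpr; nlinarith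
    have : 0 < ouU σ σ₀ θ T := by
      unfold ouU
      nlinarith [mul_pos (pow_pos hσ 2) (sub_pos.mpr hlt),
        mul_nonneg (mul_nonneg h.le (sq_nonneg σ₀)) h2.le]
    exact ne_of_gt this

-- c s t for t ≤ s
lemma ou_cform_le (T σ σ₀ θ s t : ℝ) (hθ : θ ≠ 0)
    (hD : ouU σ σ₀ θ T ≠ 0) (hts : t ≤ s) :
    (1/(2*θ)) * Real.exp (-θ*(s+t)) *
        ((2*θ*σ₀^2 - σ^2) + σ^2 * Real.exp (2*θ*(min s t)))
      - (1/(2*θ)) * Real.exp (-θ*T) *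
        ((σ^2 * Real.exp (θ*t) + (2*θ*σ₀^2 - σ^2) * Real.exp (-θ*t)) *
         (σ^2 * Real.exp (θ*s) + (2*θ*σ₀^2 - σ^2) * Real.exp (-θ*s))) /
        (σ^2 * Real.exp (θ*T) + (2*θ*σ₀^2 - σ^2) * Real.exp (-θ*T))
    = (1/(2*θ)) * (ouU σ σ₀ θ t * ouW σ σ₀ θ T s) := by
  have hmin : min s t = t := min_eq_right hts
  rw [hmin]
  unfold ouW ouU at *
  have e1 : Real.exp (-θ*(s+t)) = Real.exp (-θ*s) * Real.exp (-θ*t) := by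
    rw [← Real.exp_add]; congr 1; ring
  have e2 : Real.exp (2*θ*t) = Real.exp (θ*t) * Real.exp (θ*t) := by
    rw [← Real.exp_add]; congr 1; ring
  have e3 : Real.exp (-θ*t) * Real.exp (θ*t) = 1 := by
    rw [← Real.exp_add, show -θ*t + θ*t = 0 by ring, Real.exp_zero]
  rw [e1, e2]
  linear_combination (1/(2*θ) * Real.exp (-θ*s) * σ^2 * Real.exp (θ*t)) * e3

-- c s t for s ≤ t
lemma ou_cform_ge (T σ σ₀ θ s t : ℝ) (hst : s ≤ t) :
    (1/(2*θ)) * Real.exp (-θ*(s+t)) *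
        ((2*θ*σ₀^2 - σ^2) + σ^2 * Real.exp (2*θ*(min s t)))
      - (1/(2*θ)) * Real.exp (-θ*T) *
        ((σ^2 * Real.exp (θ*t) + (2*θ*σ₀^2 - σ^2) * Real.exp (-θ*t)) *
         (σ^2 * Real.exp (θ*s) + (2*θ*σ₀^2 - σ^2) * Real.exp (-θ*s))) /
        (σ^2 * Real.exp (θ*T) + (2*θ*σ₀^2 - σ^2) * Real.exp (-θ*T))
    = (1/(2*θ)) * (ouU σ σ₀ θ s * ouW σ σ₀ θ T t) := by
  have hmin : min s t = s := min_eq_left hst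
  rw [hmin]
  unfold ouW ouU at *
  have e1 : Real.exp (-θ*(s+t)) = Real.exp (-θ*s) * Real.exp (-θ*t) := by
    rw [← Real.exp_add]; congr 1; ring
  have e2 : Real.exp (2*θ*s) = Real.exp (θ*s) * Real.exp (θ*s) := by
    rw [← Real.exp_add]; congr 1; ring
  have e3 : Real.exp (-θ*s) * Real.exp (θ*s) = 1 := by
    rw [← Real.exp_add, show -θ*s + θ*s = 0 by ring, Real.exp_zero]
  rw [e1, e2]
  linear_combination (1/(2*θ) * Real.exp (-θ*t) * σ^2 * Real.exp (θ*s)) * e3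

-- Wronskian
lemma ou_wronskian (T σ σ₀ θ x : ℝ) :
    ouWp σ σ₀ θ T x * ouU σ σ₀ θ x - ouUp σ σ₀ θ x * ouW σ σ₀ θ T x
      = -(2*θ*σ^2) := by
  unfold ouWp ouUp ouW ouU
  have e3 : Real.exp (-θ*x) * Real.exp (θ*x) = 1 := by
    rw [← Real.exp_add, show -θ*x + θ*x = 0 by ring, Real.exp_zero]
  linear_combination (-2*θ*σ^2) * e3

lemma hasDerivAt_expc (a x : ℝ) :
    HasDerivAt (fun y => Real.exp (a*y)) (a * Real.exp (a*x)) x := by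
  simpa [mul_comm] using ((hasDerivAt_id x).const_mul a).exp

lemma ouU_deriv (σ σ₀ θ x : ℝ) :
    HasDerivAt (ouU σ σ₀ θ) (ouUp σ σ₀ θ x) x := by
  unfold ouU ouUp
  have h1 := (hasDerivAt_expc θ x).const_mul (σ^2)
  have h2 := (hasDerivAt_expc (-θ) x).const_mul (2*θ*σ₀^2 - σ^2)
  exact (h1.add h2).congr_deriv (by ring)

lemma ouUp_deriv (σ σ₀ θ x : ℝ) :
    HasDerivAt (ouUp σ σ₀ θ) (θ^2 * ouU σ σ₀ θ x) x := by
  unfold ouU ouUp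
  have h1 := (hasDerivAt_expc θ x).const_mul (θ*σ^2)
  have h2 := (hasDerivAt_expc (-θ) x).const_mul (θ*(2*θ*σ₀^2 - σ^2))
  exact (h1.sub h2).congr_deriv (by ring)

lemma ouW_deriv (σ σ₀ θ T x : ℝ) :
    HasDerivAt (ouW σ σ₀ θ T) (ouWp σ σ₀ θ T x) x := by
  unfold ouW ouWp
  have h1 := hasDerivAt_expc (-θ) x
  have h2 := (ouU_deriv σ σ₀ θ x).const_mul (Real.exp (-θ*T) / ouU σ σ₀ θ T)
  exact h1.sub h2

lemma ouWp_deriv (σ σ₀ θ T x : ℝ) :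
    HasDerivAt (ouWp σ σ₀ θ T) (θ^2 * ouW σ σ₀ θ T x) x := by
  unfold ouWp ouW
  have h1 := (hasDerivAt_expc (-θ) x).const_mul (-θ)
  have h2 := (ouUp_deriv σ σ₀ θ x).const_mul (Real.exp (-θ*T) / ouU σ σ₀ θ T)
  exact (h1.sub h2).congr_deriv (by ring)

lemma ouU_cont (σ σ₀ θ : ℝ) : Continuous (ouU σ σ₀ θ) := by
  unfold ouU; continuity

lemma ouUp_cont (σ σ₀ θ : ℝ) : Continuous (ouUp σ σ₀ θ) := by
  unfold ouUp; continuity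

lemma ouW_cont (σ σ₀ θ T : ℝ) : Continuous (ouW σ σ₀ θ T) := by
  unfold ouW
  exact (Real.continuous_exp.comp (continuous_const.mul continuous_id)).sub
    (continuous_const.mul (ouU_cont σ σ₀ θ))

lemma ouWp_cont (σ σ₀ θ T : ℝ) : Continuous (ouWp σ σ₀ θ T) := by
  unfold ouWp
  exact (continuous_const.mul (Real.continuous_exp.comp (continuous_const.mul continuous_id))).sub
    (continuous_const.mul (ouUp_cont σ σ₀ θ))

lemma ou_c_cont (T σ σ₀ θ s : ℝ) :
    Continuous (fun t : ℝ =>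
      (1/(2*θ)) * Real.exp (-θ*(s+t)) *
        ((2*θ*σ₀^2 - σ^2) + σ^2 * Real.exp (2*θ*(min s t)))
      - (1/(2*θ)) * Real.exp (-θ*T) *
        ((σ^2 * Real.exp (θ*t) + (2*θ*σ₀^2 - σ^2) * Real.exp (-θ*t)) *
         (σ^2 * Real.exp (θ*s) + (2*θ*σ₀^2 - σ^2) * Real.exp (-θ*s))) /
        (σ^2 * Real.exp (θ*T) + (2*θ*σ₀^2 - σ^2) * Real.exp (-θ*T))) := by
  have h1 : Continuous fun t : ℝ => Real.exp (-θ*(s+t)) :=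
    Real.continuous_exp.comp (continuous_const.mul (continuous_const.add continuous_id))
  have h2 : Continuous fun t : ℝ => Real.exp (2*θ*(min s t)) :=
    Real.continuous_exp.comp (continuous_const.mul (continuous_const.min continuous_id))
  have h3 : Continuous fun t : ℝ => Real.exp (θ*t) :=
    Real.continuous_exp.comp (continuous_const.mul continuous_id)
  have h4 : Continuous fun t : ℝ => Real.exp (-θ*t) :=
    Real.continuous_exp.comp (continuous_const.mul continuous_id)
  exact ((continuous_const.mul h1).mul
      (continuous_const.add (continuous_const.mul h2))).sub
    ((continuous_const.mul (((continuous_const.mul h3).add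
      (continuous_const.mul h4)).mul continuous_const)).div_const _)

/-- the image g = T^{OB} f of a continuous function f under the
Ornstein–Uhlenbeck bridge covariance operator is C² on [0,T] and satisfies the
boundary value problem g'' − θ²g = −σ²f, g(T) = 0, σ₀² g'(0) = (σ² − θσ₀²) g(0). -/
theorem ou_bridge_covariance_operator_bvp
    (T σ σ₀ θ : ℝ) (hT : 0 < T) (hσ : 0 < σ) (hσ₀ : 0 ≤ σ₀) (hθ : θ ≠ 0)
    (c : ℝ → ℝ → ℝ)
    (hc : ∀ s t : ℝ, c s t = (1/(2*θ)) * Real.exp (-θ*(s+t)) *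
        ((2*θ*σ₀^2 - σ^2) + σ^2 * Real.exp (2*θ*(min s t)))
      - (1/(2*θ)) * Real.exp (-θ*T) *
        ((σ^2 * Real.exp (θ*t) + (2*θ*σ₀^2 - σ^2) * Real.exp (-θ*t)) *
         (σ^2 * Real.exp (θ*s) + (2*θ*σ₀^2 - σ^2) * Real.exp (-θ*s))) /
        (σ^2 * Real.exp (θ*T) + (2*θ*σ₀^2 - σ^2) * Real.exp (-θ*T)))
    (f : ℝ → ℝ) (hf : ContinuousOn f (Icc (0:ℝ) T))
    (g : ℝ → ℝ) (hg : ∀ s : ℝ, g s = ∫ t in (0:ℝ)..T, c s t * f t) :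
    ∃ g' g'' : ℝ → ℝ,
      (∀ s ∈ Icc (0:ℝ) T, HasDerivWithinAt g (g' s) (Icc (0:ℝ) T) s) ∧
      (∀ s ∈ Icc (0:ℝ) T, HasDerivWithinAt g' (g'' s) (Icc (0:ℝ) T) s) ∧
      ContinuousOn g' (Icc (0:ℝ) T) ∧
      ContinuousOn g'' (Icc (0:ℝ) T) ∧
      (∀ s ∈ Icc (0:ℝ) T, g'' s - θ^2 * g s = -(σ^2) * f s) ∧
      g T = 0 ∧
      σ₀^2 * g' 0 = (σ^2 - θ*σ₀^2) * g 0 := by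
  have hD : ouU σ σ₀ θ T ≠ 0 := ouU_ne T σ σ₀ θ hT hσ hσ₀ hθ
  -- a continuous extension of f
  set fe : ℝ → ℝ := fun x => f (min (max x 0) T) with hfe_def
  have hfe : Continuous fe := by
    apply hf.comp_continuous
      ((continuous_id.max continuous_const).min continuous_const)
    intro x
    exact ⟨le_min (le_max_right x 0) hT.le, min_le_right _ T⟩
  have hfeq : ∀ x ∈ Icc (0:ℝ) T, fe x = f x := by
    intro x hx
    simp only [hfe_def]
    rw [max_eq_left hx.1, min_eq_left hx.2]
  -- the integrals
  set F : ℝ → ℝ := fun u => ∫ t in (0:ℝ)..u, ouU σ σ₀ θ t * fe t with hF_def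
  set H : ℝ → ℝ := fun u => ∫ t in (0:ℝ)..u, ouW σ σ₀ θ T t * fe t with hH_def
  set C : ℝ := ∫ t in (0:ℝ)..T, ouW σ σ₀ θ T t * fe t with hC_def
  have hUf : Continuous (fun t => ouU σ σ₀ θ t * fe t) := (ouU_cont σ σ₀ θ).mul hfe
  have hWf : Continuous (fun t => ouW σ σ₀ θ T t * fe t) := (ouW_cont σ σ₀ θ T).mul hfe
  have hFd : ∀ u : ℝ, HasDerivAt F (ouU σ σ₀ θ u * fe u) u :=
    fun u => (hUf.integral_hasStrictDerivAt 0 u).hasDerivAt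
  have hHd : ∀ u : ℝ, HasDerivAt H (ouW σ σ₀ θ T u * fe u) u :=
    fun u => (hWf.integral_hasStrictDerivAt 0 u).hasDerivAt
  set G1 : ℝ → ℝ := fun u =>
    (1/(2*θ)) * (ouW σ σ₀ θ T u * F u + ouU σ σ₀ θ u * (C - H u)) with hG1_def
  set gp : ℝ → ℝ := fun u =>
    (1/(2*θ)) * (ouWp σ σ₀ θ T u * F u + ouUp σ σ₀ θ u * (C - H u)) with hgp_def
  set gpp : ℝ → ℝ := fun u => θ^2 * g u - σ^2 * f u with hgpp_def
  -- key: g = G1 on [0,T]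
  have hgG1 : ∀ s ∈ Icc (0:ℝ) T, g s = G1 s := by
    intro s hs
    have hcf : ContinuousOn (fun t => c s t * f t) (Icc (0:ℝ) T) := by
      apply ContinuousOn.mul _ hf
      have : Continuous (fun t => c s t) := by
        simp only [hc]
        exact ou_c_cont T σ σ₀ θ s
      exact this.continuousOn
    have hsub1 : uIcc (0:ℝ) s ⊆ Icc (0:ℝ) T := by
      rw [uIcc_of_le hs.1]; exact Icc_subset_Icc le_rfl hs.2
    have hsub2 : uIcc s T ⊆ Icc (0:ℝ) T := by
      rw [uIcc_of_le hs.2]; exact Icc_subset_Icc hs.1 le_rfl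
    have h1 : IntervalIntegrable (fun t => c s t * f t) MeasureTheory.volume 0 s :=
      (hcf.mono hsub1).intervalIntegrable
    have h2 : IntervalIntegrable (fun t => c s t * f t) MeasureTheory.volume s T :=
      (hcf.mono hsub2).intervalIntegrable
    have hsplit : g s = (∫ t in (0:ℝ)..s, c s t * f t) + ∫ t in s..T, c s t * f t := by
      rw [hg s, intervalIntegral.integral_add_adjacent_intervals h1 h2]
    have hp1 : (∫ t in (0:ℝ)..s, c s t * f t)
        = (1/(2*θ) * ouW σ σ₀ θ T s) * F s := by
      rw [hF_def]
      rw [show (1/(2*θ) * ouW σ σ₀ θ T s) * ∫ t in (0:ℝ)..s, ouU σ σ₀ θ t * fe t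
          = ∫ t in (0:ℝ)..s, (1/(2*θ) * ouW σ σ₀ θ T s) * (ouU σ σ₀ θ t * fe t)
          from (intervalIntegral.integral_const_mul _ _).symm]
      apply intervalIntegral.integral_congr
      intro t ht
      rw [uIcc_of_le hs.1] at ht
      show c s t * f t = (1/(2*θ) * ouW σ σ₀ θ T s) * (ouU σ σ₀ θ t * fe t)
      rw [hc s t, ou_cform_le T σ σ₀ θ s t hθ hD ht.2,
        ← hfeq t ⟨ht.1, ht.2.trans hs.2⟩]
      ring
    have hp2 : (∫ t in s..T, c s t * f t)
        = (1/(2*θ) * ouU σ σ₀ θ s) * (C - H s) := by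
      have e1 : (∫ t in s..T, c s t * f t)
          = ∫ t in s..T, (1/(2*θ) * ouU σ σ₀ θ s) * (ouW σ σ₀ θ T t * fe t) := by
        apply intervalIntegral.integral_congr
        intro t ht
        rw [uIcc_of_le hs.2] at ht
        show c s t * f t = (1/(2*θ) * ouU σ σ₀ θ s) * (ouW σ σ₀ θ T t * fe t)
        rw [hc s t, ou_cform_ge T σ σ₀ θ s t ht.1,
          ← hfeq t ⟨hs.1.trans ht.1, ht.2⟩]
        ring
      rw [e1, intervalIntegral.integral_const_mul]
      congr 1
      have hadd : H s + (∫ t in s..T, ouW σ σ₀ θ T t * fe t) = C := by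
        rw [hH_def, hC_def]
        exact intervalIntegral.integral_add_adjacent_intervals
          (hWf.intervalIntegrable _ _) (hWf.intervalIntegrable _ _)
      linarith
    rw [hsplit, hp1, hp2, hG1_def]
    ring
  -- derivative of G1 is gp
  have hG1d : ∀ s : ℝ, HasDerivAt G1 (gp s) s := by
    intro s
    have h1 := (ouW_deriv σ σ₀ θ T s).mul (hFd s)
    have h2 := (ouU_deriv σ σ₀ θ s).mul ((hHd s).const_sub C)
    have h3 := (h1.add h2).const_mul (1/(2*θ))
    have heq : gp s = 1/(2*θ) * (ouWp σ σ₀ θ T s * F s + ouW σ σ₀ θ T s * (ouU σ σ₀ θ s * fe s)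
        + (ouUp σ σ₀ θ s * (C - H s) + ouU σ σ₀ θ s * -(ouW σ σ₀ θ T s * fe s))) := by
      rw [hgp_def]; ring
    rw [heq]
    exact h3
  -- derivative of gp
  have hgpd : ∀ s ∈ Icc (0:ℝ) T, HasDerivWithinAt gp (gpp s) (Icc (0:ℝ) T) s := by
    intro s hs
    have h1 := (ouWp_deriv σ σ₀ θ T s).mul (hFd s)
    have h2 := (ouUp_deriv σ σ₀ θ s).mul ((hHd s).const_sub C)
    have h3 := (h1.add h2).const_mul (1/(2*θ))
    have hWr : (1/(2*θ)) * (ouWp σ σ₀ θ T s * ouU σ σ₀ θ s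
        - ouUp σ σ₀ θ s * ouW σ σ₀ θ T s) = -σ^2 := by
      rw [ou_wronskian]; field_simp
    have heq : gpp s = 1/(2*θ) * (θ^2 * ouW σ σ₀ θ T s * F s
        + ouWp σ σ₀ θ T s * (ouU σ σ₀ θ s * fe s)
        + (θ^2 * ouU σ σ₀ θ s * (C - H s) + ouUp σ σ₀ θ s * -(ouW σ σ₀ θ T s * fe s))) := by
      rw [hgpp_def]
      simp only
      rw [hgG1 s hs, hG1_def, ← hfeq s hs]
      simp only
      linear_combination (-(fe s)) * hWr
    rw [heq]
    exact h3.hasDerivWithinAt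
  have hgd : ∀ s ∈ Icc (0:ℝ) T, HasDerivWithinAt g (gp s) (Icc (0:ℝ) T) s := by
    intro s hs
    exact ((hG1d s).hasDerivWithinAt).congr (fun x hx => hgG1 x hx) (hgG1 s hs)
  refine ⟨gp, gpp, hgd, hgpd, ?_, ?_, ?_, ?_, ?_⟩
  · exact fun s hs => (hgpd s hs).continuousWithinAt
  · have hgc : ContinuousOn g (Icc (0:ℝ) T) := fun s hs => (hgd s hs).continuousWithinAt
    exact (continuousOn_const.mul hgc).sub (continuousOn_const.mul hf)
  · intro s hs
    rw [hgpp_def]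
    ring
  · -- g T = 0
    have hWT : ouW σ σ₀ θ T T = 0 := by
      unfold ouW
      rw [div_mul_cancel₀ _ hD]
      ring
    have hz : (∫ t in (0:ℝ)..T, c T t * f t) = ∫ t in (0:ℝ)..T, (0:ℝ) := by
      apply intervalIntegral.integral_congr
      intro t ht
      rw [uIcc_of_le hT.le] at ht
      show c T t * f t = (0:ℝ)
      rw [hc T t, ou_cform_le T σ σ₀ θ T t hθ hD ht.2, hWT]
      ring
    rw [hg T, hz]
    simp
  · -- boundary condition at 0
    have h0 : (0:ℝ) ∈ Icc (0:ℝ) T := ⟨le_rfl, hT.le⟩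
    have hF0 : F 0 = 0 := intervalIntegral.integral_same
    have hH0 : H 0 = 0 := intervalIntegral.integral_same
    have hU0 : ouU σ σ₀ θ 0 = 2*θ*σ₀^2 := by
      unfold ouU; norm_num
    have hUp0 : ouUp σ σ₀ θ 0 = 2*θ*(σ^2 - θ*σ₀^2) := by
      unfold ouUp; norm_num; ring
    rw [hgG1 0 h0, hgp_def, hG1_def]
    simp only
    rw [hF0, hH0, hU0, hUp0]
    ring
end

section
/- Fix T > 0, σ > 0, σ₀ ≥ 0 and θ ≠ 0, and let c be the Ornstein–Uhlenbeck bridge covariance. Let w > 0 satisfy the transcendental equation (σ² − θσ₀²) sin(wT) = −w σ₀² cos(wT). Then for all s ∈ [0,T], ∫₀ᵀ c(s,t) sin(w(t−T)) dt = (σ²/(w² + θ²)) sin(w(s−T)). Moreover, if additionally T/2 − sin(2wT)/(4w) > 0, the function e(t) = (T/2 − sin(2wT)/(4w))^{−1/2} sin(w(t−T)) satisfies ∫₀ᵀ e(t)² dt = 1 and ∫₀ᵀ c(s,t) e(t) dt = (σ²/(w² + θ²)) e(s) for all s ∈ [0,T]; i.e., e is a unit Karhunen–Loève eigenfunction with eigenvalue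 σ²/(w² + θ²). -/
open Real Set intervalIntegral

lemma exp_sin_integral (a w T u v : ℝ) (hw : w ≠ 0) :
    (∫ t in u..v, Real.exp (a*t) * Real.sin (w*(t-T))) =
      (Real.exp (a*v) * (a * Real.sin (w*(v-T)) - w * Real.cos (w*(v-T)))
       - Real.exp (a*u) * (a * Real.sin (w*(u-T)) - w * Real.cos (w*(u-T)))) / (a^2+w^2) := by
  have hne : a^2 + w^2 ≠ 0 := by positivity
  have h : ∀ t ∈ Set.uIcc u v, HasDerivAt
      (fun t => Real.exp (a*t) * (a * Real.sin (w*(t-T)) - w * Real.cos (w*(t-T))) / (a^2+w^2))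
      (Real.exp (a*t) * Real.sin (w*(t-T))) t := by
    intro t _
    have h1 : HasDerivAt (fun t : ℝ => a*t) a t := by
      simpa using (hasDerivAt_id t).const_mul a
    have h2 : HasDerivAt (fun t : ℝ => w*(t-T)) w t := by
      simpa using ((hasDerivAt_id t).sub_const T).const_mul w
    have := ((h1.exp.mul ((h2.sin.const_mul a).sub (h2.cos.const_mul w)))).div_const (a^2+w^2)
    refine (this.congr_deriv ?_).congr_of_eventuallyEq (Filter.Eventually.of_forall fun _ => rfl); symm
    simp only [Pi.sub_apply]
    field_simp
    ring
  rw [intervalIntegral.integral_eq_sub_of_hasDerivAt h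
    (Continuous.intervalIntegrable (by continuity) u v)]
  ring

lemma sin_sq_integral (w T : ℝ) (hw : w ≠ 0) :
    (∫ t in (0:ℝ)..T, Real.sin (w*(t-T))^2) = T/2 - Real.sin (2*w*T)/(4*w) := by
  have h : ∀ t ∈ Set.uIcc (0:ℝ) T, HasDerivAt
      (fun t => t/2 - Real.sin (2*w*(t-T))/(4*w))
      (Real.sin (w*(t-T))^2) t := by
    intro t _
    have h2 : HasDerivAt (fun t : ℝ => 2*w*(t-T)) (2*w) t := by
      simpa using ((hasDerivAt_id t).sub_const T).const_mul (2*w)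
    have := ((hasDerivAt_id t).div_const 2).sub (h2.sin.div_const (4*w))
    refine (this.congr_deriv ?_).congr_of_eventuallyEq (Filter.Eventually.of_forall fun _ => rfl); symm
    have hc2 : Real.cos (2*w*(t-T)) = Real.cos (w*(t-T))^2 - Real.sin (w*(t-T))^2 := by
      rw [show 2*w*(t-T) = w*(t-T) + w*(t-T) by ring, Real.cos_add]; ring
    have hp := Real.sin_sq_add_cos_sq (w*(t-T))
    rw [hc2]
    field_simp
    linear_combination 4*hp
  rw [intervalIntegral.integral_eq_sub_of_hasDerivAt h
    (Continuous.intervalIntegrable (by continuity) 0 T)]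
  rw [show 2*w*((0:ℝ)-T) = -(2*w*T) by ring, Real.sin_neg, show 2*w*(T-T) = 0 by ring,
    Real.sin_zero]
  ring

lemma combo_integral (u v C1 C2 a1 a2 w T : ℝ) (hw : w ≠ 0) :
    (∫ t in u..v, (C1 * (Real.exp (a1*t) * Real.sin (w*(t-T)))
      + C2 * (Real.exp (a2*t) * Real.sin (w*(t-T))))) =
    C1 * ((Real.exp (a1*v) * (a1 * Real.sin (w*(v-T)) - w * Real.cos (w*(v-T)))
       - Real.exp (a1*u) * (a1 * Real.sin (w*(u-T)) - w * Real.cos (w*(u-T)))) / (a1^2+w^2))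
    + C2 * ((Real.exp (a2*v) * (a2 * Real.sin (w*(v-T)) - w * Real.cos (w*(v-T)))
       - Real.exp (a2*u) * (a2 * Real.sin (w*(u-T)) - w * Real.cos (w*(u-T)))) / (a2^2+w^2)) := by
  rw [intervalIntegral.integral_add
      (Continuous.intervalIntegrable (by fun_prop) u v)
      (Continuous.intervalIntegrable (by fun_prop) u v),
    intervalIntegral.integral_const_mul, intervalIntegral.integral_const_mul,
    exp_sin_integral a1 w T u v hw, exp_sin_integral a2 w T u v hw]

set_option maxHeartbeats 1600000 in
set_option maxRecDepth 4000 in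
/-- if w > 0 solves the transcendental equation
(σ² − θσ₀²) sin(wT) = −w σ₀² cos(wT), then t ↦ sin(w(t−T)) is an eigenfunction of
the Ornstein–Uhlenbeck bridge covariance operator with eigenvalue σ²/(w²+θ²), and
its normalization e is a unit Karhunen–Loève eigenfunction. -/
theorem ou_bridge_KL_eigenfunction
    (T σ σ₀ θ : ℝ) (hT : 0 < T) (hσ : 0 < σ) (hσ₀ : 0 ≤ σ₀) (hθ : θ ≠ 0)
    (c : ℝ → ℝ → ℝ)
    (hc : ∀ s t : ℝ, c s t = (1/(2*θ)) * Real.exp (-θ*(s+t)) *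
        ((2*θ*σ₀^2 - σ^2) + σ^2 * Real.exp (2*θ*(min s t)))
      - (1/(2*θ)) * Real.exp (-θ*T) *
        ((σ^2 * Real.exp (θ*t) + (2*θ*σ₀^2 - σ^2) * Real.exp (-θ*t)) *
         (σ^2 * Real.exp (θ*s) + (2*θ*σ₀^2 - σ^2) * Real.exp (-θ*s))) /
        (σ^2 * Real.exp (θ*T) + (2*θ*σ₀^2 - σ^2) * Real.exp (-θ*T)))
    (w : ℝ) (hw : 0 < w)
    (heq : (σ^2 - θ*σ₀^2) * Real.sin (w*T) = -(w * σ₀^2 * Real.cos (w*T))) :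
    (∀ s ∈ Icc (0:ℝ) T,
      (∫ t in (0:ℝ)..T, c s t * Real.sin (w*(t-T))) =
        (σ^2/(w^2 + θ^2)) * Real.sin (w*(s-T))) ∧
    (0 < T/2 - Real.sin (2*w*T)/(4*w) →
      ∀ e : ℝ → ℝ,
        (∀ t : ℝ, e t = (Real.sqrt (T/2 - Real.sin (2*w*T)/(4*w)))⁻¹ * Real.sin (w*(t-T))) →
        (∫ t in (0:ℝ)..T, (e t)^2) = 1 ∧
        ∀ s ∈ Icc (0:ℝ) T,
          (∫ t in (0:ℝ)..T, c s t * e t) = (σ^2/(w^2 + θ^2)) * e s) := by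
  have hw0 : w ≠ 0 := ne_of_gt hw
  -- nonvanishing of the denominator
  have hYpos : (0:ℝ) < Real.exp (θ*T) := Real.exp_pos _
  have hZY : Real.exp (-θ*T) * Real.exp (θ*T) = 1 := by
    rw [← Real.exp_add]; norm_num
  have hnum : σ^2 * Real.exp (θ*T)^2 + (2*θ*σ₀^2 - σ^2) ≠ 0 := by
    rcases lt_or_gt_of_ne hθ with h | h
    · have h1 : Real.exp (θ*T) < 1 := by
        rw [show (1:ℝ) = Real.exp 0 by simp]
        exact Real.exp_lt_exp.mpr (by nlinarith)
      have h2 : 2*θ*σ₀^2 ≤ 0 := by nlinarith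
      have hY2 : Real.exp (θ*T)^2 < 1 := by nlinarith
      nlinarith [mul_pos hσ hσ, hY2]
    · have h1 : 1 < Real.exp (θ*T) := by
        rw [show (1:ℝ) = Real.exp 0 by simp]
        exact Real.exp_lt_exp.mpr (by nlinarith)
      have h2 : 0 ≤ 2*θ*σ₀^2 := by nlinarith
      have hY2 : 1 < Real.exp (θ*T)^2 := by nlinarith
      nlinarith [mul_pos hσ hσ, hY2]
  have hD : σ^2 * Real.exp (θ*T) + (2*θ*σ₀^2 - σ^2) * Real.exp (-θ*T) ≠ 0 := by
    intro h0
    apply hnum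
    have : (σ^2 * Real.exp (θ*T) + (2*θ*σ₀^2 - σ^2) * Real.exp (-θ*T)) * Real.exp (θ*T)
        = σ^2 * Real.exp (θ*T)^2 + (2*θ*σ₀^2 - σ^2) := by
      linear_combination (2*θ*σ₀^2 - σ^2) * hZY
    rw [← this, h0, zero_mul]
  have main : ∀ s ∈ Icc (0:ℝ) T,
      (∫ t in (0:ℝ)..T, c s t * Real.sin (w*(t-T))) =
        (σ^2/(w^2 + θ^2)) * Real.sin (w*(s-T)) := by
    intro s hs
    obtain ⟨hs0, hsT⟩ := hs
    have hcont : Continuous (fun t => c s t * Real.sin (w*(t-T))) := by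
      simp only [hc, div_eq_mul_inv]
      fun_prop
    have hsplit := intervalIntegral.integral_add_adjacent_intervals
      (hcont.intervalIntegrable (μ := MeasureTheory.volume) 0 s)
      (hcont.intervalIntegrable (μ := MeasureTheory.volume) s T)
    have hDform : σ^2 * Real.exp (θ*T) + (2*θ*σ₀^2-σ^2) * (Real.exp (θ*T))⁻¹
        = (σ^2 * Real.exp (θ*T)^2 + (2*θ*σ₀^2-σ^2)) / Real.exp (θ*T) := by
      field_simp
    have h1 : (∫ t in (0:ℝ)..s, c s t * Real.sin (w*(t-T))) =
        ∫ t in (0:ℝ)..s,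
          (((1/(2*θ)) * σ^2 * (Real.exp (θ*s))⁻¹
            - (1/(2*θ)) * Real.exp (-θ*T) *
              ((σ^2*Real.exp (θ*s) + (2*θ*σ₀^2-σ^2)*(Real.exp (θ*s))⁻¹) * σ^2)
              / (σ^2 * Real.exp (θ*T) + (2*θ*σ₀^2 - σ^2) * Real.exp (-θ*T)))
            * (Real.exp (θ*t) * Real.sin (w*(t-T)))
          + ((1/(2*θ)) * (2*θ*σ₀^2-σ^2) * (Real.exp (θ*s))⁻¹
            - (1/(2*θ)) * Real.exp (-θ*T) *
              ((σ^2*Real.exp (θ*s) + (2*θ*σ₀^2-σ^2)*(Real.exp (θ*s))⁻¹) * (2*θ*σ₀^2-σ^2))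
              / (σ^2 * Real.exp (θ*T) + (2*θ*σ₀^2 - σ^2) * Real.exp (-θ*T)))
            * (Real.exp (-θ*t) * Real.sin (w*(t-T)))) := by
      apply intervalIntegral.integral_congr
      intro t ht
      rw [Set.uIcc_of_le hs0] at ht
      dsimp only
      rw [hc, min_eq_right ht.2]
      rw [show -θ*(s+t) = -(θ*s) + -(θ*t) by ring, Real.exp_add, Real.exp_neg, Real.exp_neg]
      rw [show 2*θ*t = θ*t + θ*t by ring, Real.exp_add]
      rw [show -θ*t = -(θ*t) by ring, Real.exp_neg, show -θ*s = -(θ*s) by ring, Real.exp_neg,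
        show -θ*T = -(θ*T) by ring, Real.exp_neg, hDform]
      field_simp [hnum]
      ring
    have h2 : (∫ t in s..T, c s t * Real.sin (w*(t-T))) =
        ∫ t in s..T,
          ((0 - (1/(2*θ)) * Real.exp (-θ*T) *
              ((σ^2*Real.exp (θ*s) + (2*θ*σ₀^2-σ^2)*(Real.exp (θ*s))⁻¹) * σ^2)
              / (σ^2 * Real.exp (θ*T) + (2*θ*σ₀^2 - σ^2) * Real.exp (-θ*T)))
            * (Real.exp (θ*t) * Real.sin (w*(t-T)))
          + ((1/(2*θ)) * (σ^2*Real.exp (θ*s) + (2*θ*σ₀^2-σ^2)*(Real.exp (θ*s))⁻¹)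
            - (1/(2*θ)) * Real.exp (-θ*T) *
              ((σ^2*Real.exp (θ*s) + (2*θ*σ₀^2-σ^2)*(Real.exp (θ*s))⁻¹) * (2*θ*σ₀^2-σ^2))
              / (σ^2 * Real.exp (θ*T) + (2*θ*σ₀^2 - σ^2) * Real.exp (-θ*T)))
            * (Real.exp (-θ*t) * Real.sin (w*(t-T)))) := by
      apply intervalIntegral.integral_congr
      intro t ht
      rw [Set.uIcc_of_le hsT] at ht
      dsimp only
      rw [hc, min_eq_left ht.1]
      rw [show -θ*(s+t) = -(θ*s) + -(θ*t) by ring, Real.exp_add, Real.exp_neg, Real.exp_neg]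
      rw [show 2*θ*s = θ*s + θ*s by ring, Real.exp_add]
      rw [show -θ*t = -(θ*t) by ring, Real.exp_neg, show -θ*s = -(θ*s) by ring, Real.exp_neg,
        show -θ*T = -(θ*T) by ring, Real.exp_neg, hDform]
      field_simp [hnum]
      ring
    rw [← hsplit, h1, h2]
    rw [combo_integral 0 s _ _ θ (-θ) w T hw0, combo_integral s T _ _ θ (-θ) w T hw0]
    rw [show w*((0:ℝ)-T) = -(w*T) by ring, show w*(T-T) = 0 by ring]
    simp only [mul_zero, Real.exp_zero, Real.sin_neg, Real.cos_neg, Real.sin_zero,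
      Real.cos_zero, neg_sq, one_mul, mul_one]
    rw [show -θ*T = -(θ*T) by ring, Real.exp_neg, show -θ*s = -(θ*s) by ring, Real.exp_neg]
    rw [hDform]
    rcases eq_or_ne (σ^2 - θ*σ₀^2) 0 with h0 | h0
    · have hσ2ne : σ₀^2 ≠ 0 := by
        intro hz
        have : σ^2 ≠ 0 := by positivity
        apply this
        rw [hz] at h0
        linarith
      have hCt0 : Real.cos (w*T) = 0 := by
        have h2 : (w*σ₀^2) * Real.cos (w*T) = 0 := by
          linear_combination heq - Real.sin (w*T) * h0
        exact (mul_eq_zero.mp h2).resolve_left (mul_ne_zero hw0 hσ2ne)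
      have hσ2 : σ^2 = θ*σ₀^2 := by linarith
      rw [hσ2] at hnum
      rw [hCt0, hσ2]
      field_simp [hnum]
      ring
    · have hSt' : Real.sin (w*T) = -(w*σ₀^2*Real.cos (w*T))/(σ^2-θ*σ₀^2) := by
        rw [eq_div_iff h0]
        linear_combination heq
      rw [hSt']
      field_simp [hnum]
      ring
  refine ⟨main, ?_⟩
  intro hpos e he
  have hNne : T/2 - Real.sin (2*w*T)/(4*w) ≠ 0 := ne_of_gt hpos
  constructor
  · simp only [he, mul_pow]
    rw [intervalIntegral.integral_const_mul, sin_sq_integral w T hw0]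
    rw [inv_pow, Real.sq_sqrt hpos.le]
    exact inv_mul_cancel₀ hNne
  · intro s hs
    simp only [he]
    rw [show (fun t => c s t * ((Real.sqrt (T/2 - Real.sin (2*w*T)/(4*w)))⁻¹ * Real.sin (w*(t-T))))
        = fun t => (Real.sqrt (T/2 - Real.sin (2*w*T)/(4*w)))⁻¹ * (c s t * Real.sin (w*(t-T)))
      from funext fun t => by ring]
    rw [intervalIntegral.integral_const_mul, main s hs]
    ring
end

section
/- Fix T > 0, σ > 0, σ₀ ≥ 0 and θ ∈ ℝ. Let w > 0 and w' > 0 be two distinct solutions of the transcendental equation (σ² − θσ₀²) sin(wT) = −w σ₀² cos(wT). Then ∫₀ᵀ sin(w(t−T)) sin(w'(t−T)) dt = 0; i.e., the corresponding Karhunen–Loève eigenfunctions of the Ornstein–Uhlenbeck bridge are orthogonal in L²([0,T]). -/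
set_option maxHeartbeats 800000


open Real Set intervalIntegral

/-- eigenfunctions of the Ornstein–Uhlenbeck bridge covariance
operator associated with two distinct positive solutions of the transcendental
equation are orthogonal in L²([0,T]). -/
theorem ou_bridge_KL_eigenfunctions_orthogonal
    (T σ σ₀ θ : ℝ) (hT : 0 < T) (hσ : 0 < σ) (hσ₀ : 0 ≤ σ₀)
    (w w' : ℝ) (hw : 0 < w) (hw' : 0 < w') (hne : w ≠ w')
    (heq : (σ^2 - θ*σ₀^2) * Real.sin (w*T) = -(w * σ₀^2 * Real.cos (w*T)))
    (heq' : (σ^2 - θ*σ₀^2) * Real.sin (w'*T) = -(w' * σ₀^2 * Real.cos (w'*T))) :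
    (∫ t in (0:ℝ)..T, Real.sin (w*(t-T)) * Real.sin (w'*(t-T))) = 0 := by
  have hu : w - w' ≠ 0 := sub_ne_zero.mpr hne
  have hv : w + w' ≠ 0 := by positivity
  -- key algebraic identity from the transcendental equations
  have hA : (σ^2 - θ*σ₀^2) *
      (w' * Real.sin (w*T) * Real.cos (w'*T) - w * Real.cos (w*T) * Real.sin (w'*T)) = 0 := by
    linear_combination (w' * Real.cos (w'*T)) * heq - (w * Real.cos (w*T)) * heq'
  have hB : σ₀^2 *
      (w' * Real.sin (w*T) * Real.cos (w'*T) - w * Real.cos (w*T) * Real.sin (w'*T)) = 0 := by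
    linear_combination Real.sin (w*T) * heq' - Real.sin (w'*T) * heq
  have hX : w' * Real.sin (w*T) * Real.cos (w'*T) - w * Real.cos (w*T) * Real.sin (w'*T) = 0 := by
    have h1 : σ^2 *
        (w' * Real.sin (w*T) * Real.cos (w'*T) - w * Real.cos (w*T) * Real.sin (w'*T)) = 0 := by
      linear_combination hA + θ * hB
    have hσ2 : (σ:ℝ)^2 ≠ 0 := by positivity
    exact (mul_eq_zero.mp h1).resolve_left hσ2
  -- antiderivative
  set F : ℝ → ℝ := fun t =>
    Real.sin ((w-w')*(t-T)) / (2*(w-w')) - Real.sin ((w+w')*(t-T)) / (2*(w+w')) with hF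
  have hderiv : ∀ t ∈ uIcc (0:ℝ) T,
      HasDerivAt F (Real.sin (w*(t-T)) * Real.sin (w'*(t-T))) t := by
    intro t _
    have h1 : HasDerivAt (fun t => Real.sin ((w-w')*(t-T)))
        (Real.cos ((w-w')*(t-T)) * (w-w')) t := by
      have := ((hasDerivAt_id t).sub_const T).const_mul (w-w')
      exact (Real.hasDerivAt_sin _).comp t (by simpa using this)
    have h2 : HasDerivAt (fun t => Real.sin ((w+w')*(t-T)))
        (Real.cos ((w+w')*(t-T)) * (w+w')) t := by
      have := ((hasDerivAt_id t).sub_const T).const_mul (w+w')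
      exact (Real.hasDerivAt_sin _).comp t (by simpa using this)
    have h := (h1.div_const (2*(w-w'))).sub (h2.div_const (2*(w+w')))
    refine h.congr_deriv ?_
    rw [show (w-w')*(t-T) = w*(t-T) - w'*(t-T) by ring,
        show (w+w')*(t-T) = w*(t-T) + w'*(t-T) by ring,
        Real.cos_sub, Real.cos_add]
    field_simp
    ring
  have hint : IntervalIntegrable (fun t => Real.sin (w*(t-T)) * Real.sin (w'*(t-T)))
      MeasureTheory.volume 0 T := by
    apply Continuous.intervalIntegrable
    fun_prop
  rw [intervalIntegral.integral_eq_sub_of_hasDerivAt hderiv hint]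
  simp only [hF]
  rw [show (w-w')*((0:ℝ)-T) = -(w*T - w'*T) by ring,
      show (w+w')*((0:ℝ)-T) = -(w*T + w'*T) by ring,
      Real.sin_neg, Real.sin_neg, Real.sin_sub, Real.sin_add, sub_self, mul_zero,
      Real.sin_zero]
  field_simp
  simp only [zero_mul, mul_zero, Real.sin_zero, neg_zero, add_zero, sub_zero]
  linear_combination (2:ℝ) * hX
end

section
/- Fix T > 0, σ > 0, θ ≠ 0 and σ₀ = 0, and let c(s,t) = (1/(2θ)) e^{−θ(s+t)} (−σ² + σ² e^{2θ min(s,t)}) − (1/(2θ)) e^{−θT} σ⁴ (e^{θt} − e^{−θt})(e^{θs} − e^{−θs}) / (σ²(e^{θT} − e^{−θT})) be the corresponding Ornstein–Uhlenbeck bridge covariance. Suppose f : [0,T] → ℝ is continuous, not identically zero, λ > 0, and ∫₀ᵀ c(s,t) f(t) dt = λ f(s) for all s ∈ [0,T]. Then there exists an integer n ≥ 1 and a nonzero constant C such that λ = σ² / ((nπ/T)² + θ²) and f(t) = C sin((nπ/T)(t − T)) for all t ∈ [0,T]. In particular every positive eigenvalue of the covariance operator is of the form σ²/((nπ/T)²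 + θ²) for some n ≥ 1. -/
open Real Set intervalIntegral

private theorem kernel_id (T σ θ s t : ℝ) (hσ : 0 < σ) (hθ : θ ≠ 0) (hθT : θ * T ≠ 0)
    (hts : t ≤ s) :
    (1/(2*θ)) * Real.exp (-θ*(s+t)) * (-(σ^2) + σ^2 * Real.exp (2*θ*(min s t)))
      - (1/(2*θ)) * Real.exp (-θ*T) *
        (σ^4 * (Real.exp (θ*t) - Real.exp (-θ*t)) * (Real.exp (θ*s) - Real.exp (-θ*s))) /
        (σ^2 * (Real.exp (θ*T) - Real.exp (-θ*T)))
    = (σ^2 / (θ * Real.sinh (θ*T))) * (Real.sinh (θ*(T-s)) * Real.sinh (θ*t)) := by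
  have hmin : min s t = t := min_eq_right hts
  have hσ' : σ ≠ 0 := hσ.ne'
  have hTne : Real.exp (θ*T) - Real.exp (-θ*T) ≠ 0 := by
    intro h
    have h2 : θ*T = -θ*T := Real.exp_injective (by linarith)
    exact hθT (by linarith)
  rw [hmin, Real.sinh_eq, Real.sinh_eq, Real.sinh_eq]
  have a1 : Real.exp (-θ*(s+t)) * Real.exp (2*θ*t) = Real.exp (θ*t) * Real.exp (-θ*s) := by
    rw [← Real.exp_add, ← Real.exp_add]; exact congrArg Real.exp (by ring)
  have r3 : Real.exp (-θ*(s+t)) = Real.exp (-θ*s) * Real.exp (-θ*t) := by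
    rw [← Real.exp_add]; exact congrArg Real.exp (by ring)
  have r0 : (1/(2*θ)) * Real.exp (-θ*(s+t)) * (-(σ^2) + σ^2 * Real.exp (2*θ*t))
      = (σ^2/(2*θ)) * (Real.exp (θ*t) * Real.exp (-θ*s) - Real.exp (-θ*s) * Real.exp (-θ*t)) := by
    linear_combination (σ^2/(2*θ)) * a1 - (σ^2/(2*θ)) * r3
  rw [r0]
  have r1 : Real.exp (θ*(T-s)) = Real.exp (θ*T) * Real.exp (-θ*s) := by
    rw [← Real.exp_add]; exact congrArg Real.exp (by ring)
  have r2 : Real.exp (-(θ*(T-s))) = Real.exp (-θ*T) * Real.exp (θ*s) := by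
    rw [← Real.exp_add]; exact congrArg Real.exp (by ring)
  have r4 : Real.exp (-(θ*T)) = Real.exp (-θ*T) := congrArg Real.exp (by ring)
  have r5 : Real.exp (-(θ*t)) = Real.exp (-θ*t) := congrArg Real.exp (by ring)
  rw [r1, r2, r4, r5]
  set w := Real.exp (θ*T) - Real.exp (-θ*T) with hw
  field_simp
  simp only [hw, neg_mul]; ring

/-- for the Ornstein–Uhlenbeck bridge with deterministic starting
point (σ₀ = 0), every continuous eigenfunction of the covariance operator with
positive eigenvalue λ is a multiple of t ↦ sin((nπ/T)(t−T)) for some integer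
n ≥ 1, with λ = σ²/((nπ/T)² + θ²). -/
theorem ou_bridge_deterministic_start_eigen_classification
    (T σ θ : ℝ) (hT : 0 < T) (hσ : 0 < σ) (hθ : θ ≠ 0)
    (c : ℝ → ℝ → ℝ)
    (hc : ∀ s t : ℝ, c s t = (1/(2*θ)) * Real.exp (-θ*(s+t)) *
        (-(σ^2) + σ^2 * Real.exp (2*θ*(min s t)))
      - (1/(2*θ)) * Real.exp (-θ*T) *
        (σ^4 * (Real.exp (θ*t) - Real.exp (-θ*t)) * (Real.exp (θ*s) - Real.exp (-θ*s))) /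
        (σ^2 * (Real.exp (θ*T) - Real.exp (-θ*T))))
    (f : ℝ → ℝ) (hf : ContinuousOn f (Icc (0:ℝ) T))
    (hfne : ∃ t ∈ Icc (0:ℝ) T, f t ≠ 0)
    (lam : ℝ) (hlam : 0 < lam)
    (heigen : ∀ s ∈ Icc (0:ℝ) T, (∫ t in (0:ℝ)..T, c s t * f t) = lam * f s) :
    ∃ n : ℕ, 1 ≤ n ∧ ∃ C : ℝ, C ≠ 0 ∧
      lam = σ^2 / ((n*Real.pi/T)^2 + θ^2) ∧
      ∀ t ∈ Icc (0:ℝ) T, f t = C * Real.sin ((n*Real.pi/T) * (t - T)) := by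
  have hσ' : σ ≠ 0 := hσ.ne'
  have hθT : θ * T ≠ 0 := mul_ne_zero hθ hT.ne'
  have hsinhT : Real.sinh (θ*T) ≠ 0 := by
    rw [ne_eq, Real.sinh_eq_zero]; exact hθT
  set K : ℝ := σ^2 / (θ * Real.sinh (θ*T)) with hK
  -- clamped version of f
  set fc : ℝ → ℝ := fun x => f (min (max x 0) T) with hfc
  have hmaps : ∀ x : ℝ, min (max x 0) T ∈ Icc (0:ℝ) T := fun x =>
    ⟨le_min (le_max_right x 0) hT.le, min_le_right _ _⟩
  have hfc_cont : Continuous fc :=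
    hf.comp_continuous ((continuous_id.max continuous_const).min continuous_const) hmaps
  have hfc_eq : ∀ x ∈ Icc (0:ℝ) T, fc x = f x := by
    intro x hx
    simp only [hfc]
    rw [max_eq_left hx.1, min_eq_left hx.2]
  set u : ℝ → ℝ := fun x => Real.sinh (θ*x) * fc x with hu
  set v : ℝ → ℝ := fun x => Real.sinh (θ*(T-x)) * fc x with hv
  have hu_cont : Continuous u := by
    apply Continuous.mul _ hfc_cont
    exact Real.continuous_sinh.comp (continuous_const.mul continuous_id)
  have hv_cont : Continuous v := by
    apply Continuous.mul _ hfc_cont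
    exact Real.continuous_sinh.comp (continuous_const.mul (continuous_const.sub continuous_id))
  set A : ℝ → ℝ := fun x => ∫ r in (0:ℝ)..x, u r with hA
  set B : ℝ → ℝ := fun x => ∫ r in x..T, v r with hB
  have hAderiv : ∀ x : ℝ, HasDerivAt A (u x) x := fun x =>
    intervalIntegral.integral_hasDerivAt_right (hu_cont.intervalIntegrable _ _)
      (hu_cont.stronglyMeasurableAtFilter _ _) hu_cont.continuousAt
  have hBalt : ∀ y : ℝ, B y = (∫ r in (0:ℝ)..T, v r) - ∫ r in (0:ℝ)..y, v r := by
    intro y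
    rw [hB]
    rw [intervalIntegral.integral_interval_sub_left (hv_cont.intervalIntegrable _ _)
      (hv_cont.intervalIntegrable _ _)]
  have hBderiv : ∀ x : ℝ, HasDerivAt B (-(v x)) x := by
    intro x
    have h1 : HasDerivAt (fun y => (∫ r in (0:ℝ)..T, v r) - ∫ r in (0:ℝ)..y, v r) (-(v x)) x := by
      have h2 : HasDerivAt (fun y => ∫ r in (0:ℝ)..y, v r) (v x) x :=
        intervalIntegral.integral_hasDerivAt_right (hv_cont.intervalIntegrable _ _)
          (hv_cont.stronglyMeasurableAtFilter _ _) hv_cont.continuousAt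
      exact ((hasDerivAt_const x (∫ r in (0:ℝ)..T, v r)).sub h2).congr_deriv (zero_sub _)
    exact h1.congr_of_eventuallyEq (Filter.Eventually.of_forall fun y => (hBalt y))
  set G : ℝ → ℝ := fun x => K * (Real.sinh (θ*(T-x)) * A x + Real.sinh (θ*x) * B x) with hG
  -- G agrees with lam * f on [0, T]
  have hcxcont : ∀ x : ℝ, Continuous (fun t => c x t) := by
    intro x
    have he : (fun t => c x t) = fun t => (1/(2*θ)) * Real.exp (-θ*(x+t)) *
        (-(σ^2) + σ^2 * Real.exp (2*θ*(min x t)))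
      - (1/(2*θ)) * Real.exp (-θ*T) *
        (σ^4 * (Real.exp (θ*t) - Real.exp (-θ*t)) * (Real.exp (θ*x) - Real.exp (-θ*x))) /
        (σ^2 * (Real.exp (θ*T) - Real.exp (-θ*T))) := funext (hc x)
    rw [he]
    apply Continuous.sub
    · exact (continuous_const.mul (Real.continuous_exp.comp
        (continuous_const.mul (continuous_const.add continuous_id)))).mul
        (continuous_const.add (continuous_const.mul (Real.continuous_exp.comp
          (continuous_const.mul (continuous_const.min continuous_id)))))
    · apply Continuous.div_const
      exact continuous_const.mul ((continuous_const.mul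
        ((Real.continuous_exp.comp (continuous_const.mul continuous_id)).sub
          (Real.continuous_exp.comp (continuous_const.mul continuous_id)))).mul
        continuous_const)
  have hGf : ∀ x ∈ Icc (0:ℝ) T, G x = lam * f x := by
    intro x hx
    have hint1 : IntervalIntegrable (fun t => c x t * f t) MeasureTheory.volume 0 x := by
      apply ContinuousOn.intervalIntegrable
      exact ((hcxcont x).continuousOn).mul
        (hf.mono (by rw [uIcc_of_le hx.1]; exact Icc_subset_Icc le_rfl hx.2))
    have hint2 : IntervalIntegrable (fun t => c x t * f t) MeasureTheory.volume x T := by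
      apply ContinuousOn.intervalIntegrable
      exact ((hcxcont x).continuousOn).mul
        (hf.mono (by rw [uIcc_of_le hx.2]; exact Icc_subset_Icc hx.1 le_rfl))
    have hsplit : (∫ t in (0:ℝ)..T, c x t * f t)
        = (∫ t in (0:ℝ)..x, c x t * f t) + ∫ t in x..T, c x t * f t :=
      (intervalIntegral.integral_add_adjacent_intervals hint1 hint2).symm
    have hpiece1 : (∫ t in (0:ℝ)..x, c x t * f t)
        = (K * Real.sinh (θ*(T-x))) * A x := by
      have : (∫ t in (0:ℝ)..x, c x t * f t)
          = ∫ t in (0:ℝ)..x, (K * Real.sinh (θ*(T-x))) * u t := by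
        apply intervalIntegral.integral_congr
        intro t ht
        rw [uIcc_of_le hx.1] at ht
        show c x t * f t = (K * Real.sinh (θ*(T-x))) * u t
        rw [hc x t, kernel_id T σ θ x t hσ hθ hθT ht.2, hu]
        simp only []
        rw [hfc_eq t ⟨ht.1, ht.2.trans hx.2⟩]
        ring
      rw [this, intervalIntegral.integral_const_mul]
    have hpiece2 : (∫ t in x..T, c x t * f t)
        = (K * Real.sinh (θ*x)) * B x := by
      have : (∫ t in x..T, c x t * f t)
          = ∫ t in x..T, (K * Real.sinh (θ*x)) * v t := by
        apply intervalIntegral.integral_congr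
        intro t ht
        rw [uIcc_of_le hx.2] at ht
        show c x t * f t = (K * Real.sinh (θ*x)) * v t
        have hct : c x t = c t x := by rw [hc, hc, min_comm, add_comm x t]; ring
        rw [hc t x] at hct
        rw [hct, kernel_id T σ θ t x hσ hθ hθT ht.1, hv]
        simp only []
        rw [hfc_eq t ⟨hx.1.trans ht.1, ht.2⟩]
        ring
      rw [this, intervalIntegral.integral_const_mul]
    rw [← heigen x hx, hsplit, hpiece1, hpiece2, hG]
    ring
  -- explicit first derivative of G
  set D : ℝ → ℝ := fun x => K * θ * (Real.cosh (θ*x) * B x - Real.cosh (θ*(T-x)) * A x)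
    with hD
  have hlin1 : ∀ x : ℝ, HasDerivAt (fun y : ℝ => θ*(T-y)) (-θ) x := by
    intro x
    simpa using ((hasDerivAt_id x).const_sub T).const_mul θ
  have hlin2 : ∀ x : ℝ, HasDerivAt (fun y : ℝ => θ*y) θ x := by
    intro x
    simpa using (hasDerivAt_id x).const_mul θ
  have hs1 : ∀ x : ℝ, HasDerivAt (fun y => Real.sinh (θ*(T-y)))
      (-θ * Real.cosh (θ*(T-x))) x := by
    intro x
    have := (Real.hasDerivAt_sinh (θ*(T-x))).comp x (hlin1 x)
    exact this.congr_deriv (by ring)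
  have hs2 : ∀ x : ℝ, HasDerivAt (fun y => Real.sinh (θ*y)) (θ * Real.cosh (θ*x)) x := by
    intro x
    have := (Real.hasDerivAt_sinh (θ*x)).comp x (hlin2 x)
    exact this.congr_deriv (by ring)
  have hc1 : ∀ x : ℝ, HasDerivAt (fun y => Real.cosh (θ*(T-y)))
      (-θ * Real.sinh (θ*(T-x))) x := by
    intro x
    have := (Real.hasDerivAt_cosh (θ*(T-x))).comp x (hlin1 x)
    exact this.congr_deriv (by ring)
  have hc2 : ∀ x : ℝ, HasDerivAt (fun y => Real.cosh (θ*y)) (θ * Real.sinh (θ*x)) x := by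
    intro x
    have := (Real.hasDerivAt_cosh (θ*x)).comp x (hlin2 x)
    exact this.congr_deriv (by ring)
  have hGderiv : ∀ x : ℝ, HasDerivAt G (D x) x := by
    intro x
    have hraw : HasDerivAt (fun y => K * (Real.sinh (θ*(T-y)) * A y + Real.sinh (θ*y) * B y))
        (K * ((-θ * Real.cosh (θ*(T-x)) * A x + Real.sinh (θ*(T-x)) * u x)
          + (θ * Real.cosh (θ*x) * B x + Real.sinh (θ*x) * -(v x)))) x :=
      (((hs1 x).mul (hAderiv x)).add ((hs2 x).mul (hBderiv x))).const_mul K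
    have : HasDerivAt G (K * ((-θ * Real.cosh (θ*(T-x)) * A x + Real.sinh (θ*(T-x)) * u x)
          + (θ * Real.cosh (θ*x) * B x + Real.sinh (θ*x) * -(v x)))) x := hraw
    convert this using 1
    simp only [hD, hu, hv]
    ring
  have hsinh_add : ∀ x : ℝ, Real.sinh (θ*(T-x)) * Real.cosh (θ*x)
      + Real.cosh (θ*(T-x)) * Real.sinh (θ*x) = Real.sinh (θ*T) := by
    intro x
    rw [← Real.sinh_add]
    exact congrArg Real.sinh (by ring)
  have hKθ : K * θ * Real.sinh (θ*T) = σ^2 := by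
    rw [hK]; field_simp
  have hDderiv : ∀ x : ℝ, HasDerivAt D (θ^2 * G x - σ^2 * fc x) x := by
    intro x
    have hraw : HasDerivAt (fun y => K * θ * (Real.cosh (θ*y) * B y - Real.cosh (θ*(T-y)) * A y))
        (K * θ * ((θ * Real.sinh (θ*x) * B x + Real.cosh (θ*x) * -(v x))
          - (-θ * Real.sinh (θ*(T-x)) * A x + Real.cosh (θ*(T-x)) * u x))) x :=
      (((hc2 x).mul (hBderiv x)).sub ((hc1 x).mul (hAderiv x))).const_mul (K * θ)
    have h2 : HasDerivAt D (K * θ * ((θ * Real.sinh (θ*x) * B x + Real.cosh (θ*x) * -(v x))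
          - (-θ * Real.sinh (θ*(T-x)) * A x + Real.cosh (θ*(T-x)) * u x))) x := hraw
    convert h2 using 1
    simp only [hG, hu, hv]
    have h3 := hsinh_add x
    linear_combination (K * θ * fc x) * h3 + fc x * hKθ
  -- boundary values of G
  have hGcont : Continuous G := by
    rw [continuous_iff_continuousAt]; exact fun x => (hGderiv x).continuousAt
  have hDcont : Continuous D := by
    rw [continuous_iff_continuousAt]; exact fun x => (hDderiv x).continuousAt
  have hG0 : G 0 = 0 := by
    have hA0 : A 0 = 0 := intervalIntegral.integral_same
    simp [hG, hA0, hA, mul_zero, Real.sinh_zero]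
  have hGT : G T = 0 := by
    have hBT : B T = 0 := intervalIntegral.integral_same
    simp [hG, hBT, hB, sub_self, mul_zero, Real.sinh_zero]
  have hfG : ∀ x ∈ Icc (0:ℝ) T, f x = G x / lam := by
    intro x hx
    rw [hGf x hx]
    field_simp
  set k : ℝ := θ^2 - σ^2/lam with hk
  have hkey : ∀ x ∈ Icc (0:ℝ) T, HasDerivAt D (k * G x) x := by
    intro x hx
    have h1 : θ^2 * G x - σ^2 * fc x = k * G x := by
      rw [hfc_eq x hx, hfG x hx, hk]
      field_simp
    rw [← h1]
    exact hDderiv x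
  rcases le_or_gt 0 k with hkpos | hkneg
  · -- k ≥ 0 : contradiction with f ≢ 0
    exfalso
    set P : ℝ → ℝ := fun x => G x * D x with hP
    have hPd : ∀ x ∈ Icc (0:ℝ) T, HasDerivAt P (D x * D x + G x * (k * G x)) x :=
      fun x hx => (hGderiv x).mul (hkey x hx)
    have hPcont : ContinuousOn P (Icc (0:ℝ) T) := (hGcont.mul hDcont).continuousOn
    have hPdiff : DifferentiableOn ℝ P (interior (Icc (0:ℝ) T)) := fun x hx =>
      ((hPd x (interior_subset hx)).differentiableAt).differentiableWithinAt
    have hPmono : MonotoneOn P (Icc (0:ℝ) T) := by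
      apply monotoneOn_of_deriv_nonneg (convex_Icc 0 T) hPcont hPdiff
      intro x hx
      rw [(hPd x (interior_subset hx)).deriv]
      nlinarith [mul_self_nonneg (D x), mul_self_nonneg (G x),
        mul_nonneg hkpos (mul_self_nonneg (G x))]
    have hP0 : P 0 = 0 := by simp [hP, hG0]
    have hPT : P T = 0 := by simp [hP, hGT]
    have hPzero : ∀ x ∈ Icc (0:ℝ) T, P x = 0 := by
      intro x hx
      have h1 := hPmono (left_mem_Icc.2 hT.le) hx hx.1
      have h2 := hPmono hx (right_mem_Icc.2 hT.le) hx.2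
      rw [hP0] at h1
      rw [hPT] at h2
      linarith
    have hQ : ∀ x ∈ Icc (0:ℝ) T, G x * G x = G 0 * G 0 := by
      apply constant_of_has_deriv_right_zero (hGcont.mul hGcont).continuousOn
      intro x hx
      have h1 : HasDerivAt (fun y => G y * G y) (D x * G x + G x * D x) x :=
        (hGderiv x).mul (hGderiv x)
      have h2 : D x * G x + G x * D x = 0 := by
        have h3 := hPzero x (Ico_subset_Icc_self hx)
        rw [hP] at h3
        simp only [] at h3
        linarith [h3]
      rw [← h2]
      exact h1.hasDerivWithinAt
    obtain ⟨t0, ht0, hft0⟩ := hfne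
    have h4 : G t0 * G t0 = 0 := by rw [hQ t0 ht0, hG0]; ring
    have h5 : G t0 = 0 := mul_self_eq_zero.1 h4
    have h6 : f t0 = 0 := by rw [hfG t0 ht0, h5, zero_div]
    exact hft0 h6
  · -- k < 0 : sine eigenfunctions
    set ω : ℝ := Real.sqrt (-k) with hω
    have hωpos : 0 < ω := Real.sqrt_pos.2 (by linarith)
    have hω2 : ω^2 = -k := Real.sq_sqrt (by linarith)
    set h1f : ℝ → ℝ := fun x => G x - (D T/ω) * Real.sin (ω*(x-T)) with hh1
    set h2f : ℝ → ℝ := fun x => D x - (D T) * Real.cos (ω*(x-T)) with hh2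
    have hlin3 : ∀ x : ℝ, HasDerivAt (fun y : ℝ => ω*(y-T)) ω x := by
      intro x
      simpa using ((hasDerivAt_id x).sub_const T).const_mul ω
    have hsin : ∀ x : ℝ, HasDerivAt (fun y => Real.sin (ω*(y-T)))
        (ω * Real.cos (ω*(x-T))) x := by
      intro x
      have := (Real.hasDerivAt_sin (ω*(x-T))).comp x (hlin3 x)
      exact this.congr_deriv (by ring)
    have hcos : ∀ x : ℝ, HasDerivAt (fun y => Real.cos (ω*(y-T)))
        (-(ω * Real.sin (ω*(x-T)))) x := by
      intro x
      have := (Real.hasDerivAt_cos (ω*(x-T))).comp x (hlin3 x)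
      have h2 : -Real.sin (ω*(x-T)) * ω = -(ω * Real.sin (ω*(x-T))) := by ring
      exact this.congr_deriv h2
    have hh1deriv : ∀ x : ℝ, HasDerivAt h1f (h2f x) x := by
      intro x
      have hraw : HasDerivAt h1f (D x - (D T/ω) * (ω * Real.cos (ω*(x-T)))) x :=
        (hGderiv x).sub ((hsin x).const_mul (D T/ω))
      convert hraw using 1
      rw [hh2]
      field_simp
    have hh2deriv : ∀ x ∈ Icc (0:ℝ) T, HasDerivAt h2f (k * h1f x) x := by
      intro x hx
      have hraw : HasDerivAt h2f (k * G x - (D T) * -(ω * Real.sin (ω*(x-T)))) x :=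
        (hkey x hx).sub ((hcos x).const_mul (D T))
      convert hraw using 1
      have hk2 : k = -(ω^2) := by linarith [hω2]
      rw [hh1, hk2]
      field_simp
      ring
    set E : ℝ → ℝ := fun x => h2f x * h2f x + ω^2 * (h1f x * h1f x) with hE
    have hh1cont : Continuous h1f := by
      rw [hh1]
      exact hGcont.sub (continuous_const.mul
        (Real.continuous_sin.comp (continuous_const.mul (continuous_id.sub continuous_const))))
    have hh2cont : Continuous h2f := by
      rw [hh2]
      exact hDcont.sub (continuous_const.mul
        (Real.continuous_cos.comp (continuous_const.mul (continuous_id.sub continuous_const))))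
    have hEcont : Continuous E := by
      rw [hE]
      exact (hh2cont.mul hh2cont).add (continuous_const.mul (hh1cont.mul hh1cont))
    have hEconst : ∀ x ∈ Icc (0:ℝ) T, E x = E 0 := by
      apply constant_of_has_deriv_right_zero hEcont.continuousOn
      intro x hx
      have hxI : x ∈ Icc (0:ℝ) T := Ico_subset_Icc_self hx
      have hraw : HasDerivAt E ((k * h1f x * h2f x + h2f x * (k * h1f x))
          + ω^2 * (h2f x * h1f x + h1f x * h2f x)) x :=
        ((hh2deriv x hxI).mul (hh2deriv x hxI)).add
          (((hh1deriv x).mul (hh1deriv x)).const_mul (ω^2))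
      have hval : (k * h1f x * h2f x + h2f x * (k * h1f x))
          + ω^2 * (h2f x * h1f x + h1f x * h2f x) = 0 := by
        linear_combination (2 * h1f x * h2f x) * hω2
      rw [hval] at hraw
      exact hraw.hasDerivWithinAt
    have hh1T : h1f T = 0 := by
      rw [hh1]
      simp [hGT, sub_self]
    have hh2T : h2f T = 0 := by
      rw [hh2]
      simp [sub_self]
    have hET : E T = 0 := by
      rw [hE]
      simp only []
      rw [hh1T, hh2T]
      ring
    have hE0 : E 0 = 0 := by
      have h4 := hEconst T (right_mem_Icc.2 hT.le)
      rw [hET] at h4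
      exact h4.symm
    have hh1zero : ∀ x ∈ Icc (0:ℝ) T, h1f x = 0 := by
      intro x hx
      have h4 : E x = 0 := by rw [hEconst x hx, hE0]
      rw [hE] at h4
      simp only [] at h4
      have hω2pos : 0 < ω^2 := pow_pos hωpos 2
      have h5 : h1f x * h1f x ≤ 0 := by
        have h4' : h2f x * h2f x + ω^2 * (h1f x * h1f x) = 0 := h4
        by_contra hc
        push_neg at hc
        linarith [mul_pos hω2pos hc, mul_self_nonneg (h2f x)]
      have h6 : h1f x * h1f x = 0 := le_antisymm h5 (mul_self_nonneg _)
      exact mul_self_eq_zero.1 h6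
    have hGform : ∀ x ∈ Icc (0:ℝ) T, G x = (D T/ω) * Real.sin (ω*(x-T)) := by
      intro x hx
      have h7 := hh1zero x hx
      rw [hh1] at h7
      simp only [] at h7
      linarith
    have haz : D T ≠ 0 := by
      intro h0
      obtain ⟨t0, ht0, hft0⟩ := hfne
      have h8 := hGform t0 ht0
      rw [h0, zero_div, zero_mul] at h8
      have h9 : f t0 = 0 := by rw [hfG t0 ht0, h8, zero_div]
      exact hft0 h9
    have hsinT : Real.sin (ω*T) = 0 := by
      have h5 := hGform 0 (left_mem_Icc.2 hT.le)
      rw [hG0] at h5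
      have h6 : Real.sin (ω*(0-T)) = 0 := by
        rcases mul_eq_zero.1 h5.symm with h7 | h7
        · exact absurd h7 (div_ne_zero haz hωpos.ne')
        · exact h7
      rw [show ω*((0:ℝ)-T) = -(ω*T) by ring, Real.sin_neg] at h6
      linarith
    obtain ⟨m, hm⟩ := Real.sin_eq_zero_iff.1 hsinT
    have hmpos : 0 < m := by
      by_contra h
      push_neg at h
      have h1 : (m:ℝ) ≤ 0 := by exact_mod_cast h
      nlinarith [Real.pi_pos, mul_pos hωpos hT]
    have hmn : ((m.toNat : ℕ) : ℝ) = (m:ℝ) := by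
      have h1 : ((m.toNat : ℤ)) = m := Int.toNat_of_nonneg hmpos.le
      exact_mod_cast h1
    have hωeq : ω = (m.toNat : ℝ)*π/T := by
      rw [hmn]
      field_simp
      linarith [hm]
    refine ⟨m.toNat, by omega, (D T)/(lam * ω), ?_, ?_, ?_⟩
    · exact div_ne_zero haz (mul_ne_zero hlam.ne' hωpos.ne')
    · rw [← hωeq]
      have h7 : ω^2 + θ^2 = σ^2/lam := by
        rw [hω2, hk]
        ring
      have h9 : ω^2 + θ^2 ≠ 0 := by
        rw [h7]
        positivity
      rw [eq_div_iff h9, h7]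
      field_simp
    · intro t ht
      rw [← hωeq]
      rw [hfG t ht, hGform t ht]
      rw [div_mul_eq_mul_div, div_div, div_mul_eq_mul_div, mul_comm ω lam]
end

section
/- Fix T > 0, σ > 0, σ₀ > 0 and θ ∈ ℝ with θσ₀² < σ². Then for every integer n ≥ 1 there is exactly one solution w of the equation (σ² − θσ₀²) sin(wT) = −w σ₀² cos(wT) (equivalently (σ² − θσ₀²) tan(wT) = −σ₀² w) in the open interval (nπ/T − π/(2T), nπ/T), and every positive solution of this equation lies in one of these intervals. Consequently the positive solutions form a strictly increasing sequence (w_n)_{n≥1} with w_n ∈ (nπ/T − π/(2T), nπ/T) for each n ≥ 1. -/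
open Real Set

/-- No zeros of f(x)=a sin x + b x cos x in (mπ, mπ+π/2). -/
lemma ou_aux_ne_zero_right (a b : ℝ) (ha : 0 < a) (hb : 0 < b) (m : ℕ) (x : ℝ)
    (hx : x ∈ Ioo ((m : ℝ) * Real.pi) ((m : ℝ) * Real.pi + Real.pi / 2)) :
    a * Real.sin x + b * x * Real.cos x ≠ 0 := by
  obtain ⟨h1, h2⟩ := hx
  have hx0 : 0 < x := lt_of_le_of_lt (by positivity) h1
  set t := x - (m : ℝ) * Real.pi with ht
  have htx : t + (m : ℝ) * Real.pi = x := by ring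
  have ht1 : 0 < t := by simp [ht]; linarith
  have ht2 : t < Real.pi / 2 := by simp only [ht]; linarith
  have hsin : Real.sin x = (-1 : ℝ) ^ m * Real.sin t := by
    rw [← htx, Real.sin_add_nat_mul_pi]
  have hcos : Real.cos x = (-1 : ℝ) ^ m * Real.cos t := by
    rw [← htx, Real.cos_add_nat_mul_pi]
  have hsint : 0 < Real.sin t :=
    Real.sin_pos_of_pos_of_lt_pi ht1 (by linarith [Real.pi_pos])
  have hcost : 0 < Real.cos t :=
    Real.cos_pos_of_mem_Ioo ⟨by linarith [Real.pi_pos], ht2⟩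
  have hS : 0 < a * Real.sin t + b * x * Real.cos t := by positivity
  have hrw : a * Real.sin x + b * x * Real.cos x
      = (-1 : ℝ) ^ m * (a * Real.sin t + b * x * Real.cos t) := by
    rw [hsin, hcos]; ring
  rw [hrw]
  exact mul_ne_zero (pow_ne_zero _ (by norm_num)) (ne_of_gt hS)

lemma ou_aux_val_npi (a b : ℝ) (hb : 0 < b) (n : ℕ) (hn : 1 ≤ n) :
    a * Real.sin ((n : ℝ) * Real.pi) + b * ((n : ℝ) * Real.pi) * Real.cos ((n : ℝ) * Real.pi) ≠ 0 := by
  have hsin : Real.sin ((n : ℝ) * Real.pi) = 0 := Real.sin_nat_mul_pi n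
  have hcos : Real.cos ((n : ℝ) * Real.pi) = (-1 : ℝ) ^ n := by
    have := Real.cos_add_nat_mul_pi 0 n
    simpa using this
  rw [hsin, hcos]
  have hnpos : (0 : ℝ) < (n : ℝ) * Real.pi := by
    have : (1 : ℝ) ≤ (n : ℝ) := by exact_mod_cast hn
    nlinarith [Real.pi_pos]
  simp only [mul_zero, zero_add]
  exact mul_ne_zero (by positivity) (pow_ne_zero _ (by norm_num))

lemma ou_aux_val_half (a b : ℝ) (ha : 0 < a) (n : ℕ) :
    a * Real.sin ((n : ℝ) * Real.pi - Real.pi / 2)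
      + b * ((n : ℝ) * Real.pi - Real.pi / 2) * Real.cos ((n : ℝ) * Real.pi - Real.pi / 2) ≠ 0 := by
  have hsin : Real.sin ((n : ℝ) * Real.pi - Real.pi / 2) = -((-1 : ℝ) ^ n) := by
    rw [Real.sin_nat_mul_pi_sub, Real.sin_pi_div_two, mul_one]
  have hcos : Real.cos ((n : ℝ) * Real.pi - Real.pi / 2) = 0 := by
    rw [Real.cos_nat_mul_pi_sub, Real.cos_pi_div_two, mul_zero]
  rw [hsin, hcos]
  simp only [mul_zero, add_zero]
  intro h
  have := mul_ne_zero (ne_of_gt ha) (neg_ne_zero.mpr (pow_ne_zero n (show (-1:ℝ) ≠ 0 by norm_num)))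
  exact this h

lemma ou_aux_exists (a b : ℝ) (ha : 0 < a) (hb : 0 < b) (n : ℕ) (hn : 1 ≤ n) :
    ∃ x ∈ Ioo ((n : ℝ) * Real.pi - Real.pi / 2) ((n : ℝ) * Real.pi),
      a * Real.sin x + b * x * Real.cos x = 0 := by
  set F : ℝ → ℝ := fun x => (-1 : ℝ) ^ n * (a * Real.sin x + b * x * Real.cos x) with hF
  have hle : (n : ℝ) * Real.pi - Real.pi / 2 ≤ (n : ℝ) * Real.pi := by linarith [Real.pi_pos]
  have hcont : ContinuousOn F (Icc ((n : ℝ) * Real.pi - Real.pi / 2) ((n : ℝ) * Real.pi)) := by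
    apply Continuous.continuousOn; fun_prop
  have hFl : F ((n : ℝ) * Real.pi - Real.pi / 2) = -a := by
    simp only [hF, Real.sin_nat_mul_pi_sub, Real.cos_nat_mul_pi_sub,
      Real.sin_pi_div_two, Real.cos_pi_div_two]
    have : ((-1 : ℝ) ^ n) * ((-1 : ℝ) ^ n) = 1 := by
      rw [← pow_add]; simp [pow_mul]
    linear_combination (-a) * this
  have hFr : F ((n : ℝ) * Real.pi) = b * ((n : ℝ) * Real.pi) := by
    have hcos : Real.cos ((n : ℝ) * Real.pi) = (-1 : ℝ) ^ n := by
      have := Real.cos_add_nat_mul_pi 0 n; simpa using this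
    simp only [hF, Real.sin_nat_mul_pi, hcos]
    have : ((-1 : ℝ) ^ n) * ((-1 : ℝ) ^ n) = 1 := by
      rw [← pow_add]; simp [pow_mul]
    linear_combination (b * ((n : ℝ) * Real.pi)) * this
  have hnpos : (0 : ℝ) < (n : ℝ) * Real.pi := by
    have : (1 : ℝ) ≤ (n : ℝ) := by exact_mod_cast hn
    nlinarith [Real.pi_pos]
  have h0 : (0 : ℝ) ∈ Ioo (F ((n : ℝ) * Real.pi - Real.pi / 2)) (F ((n : ℝ) * Real.pi)) := by
    rw [hFl, hFr]; constructor
    · linarith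
    · positivity
  obtain ⟨x, hxI, hxF⟩ := intermediate_value_Ioo hle hcont h0
  refine ⟨x, hxI, ?_⟩
  have := hxF
  simp only [hF] at this
  rcases mul_eq_zero.mp this with h | h
  · exact absurd h (pow_ne_zero _ (by norm_num))
  · exact h

lemma ou_aux_unique (a b : ℝ) (ha : 0 < a) (hb : 0 < b) (n : ℕ) (x y : ℝ)
    (hx : x ∈ Ioo ((n : ℝ) * Real.pi - Real.pi / 2) ((n : ℝ) * Real.pi))
    (hy : y ∈ Ioo ((n : ℝ) * Real.pi - Real.pi / 2) ((n : ℝ) * Real.pi))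
    (hfx : a * Real.sin x + b * x * Real.cos x = 0)
    (hfy : a * Real.sin y + b * y * Real.cos y = 0) : x = y := by
  -- tan reformulation
  have key : ∀ z ∈ Ioo ((n : ℝ) * Real.pi - Real.pi / 2) ((n : ℝ) * Real.pi),
      a * Real.sin z + b * z * Real.cos z = 0 → a * Real.tan z + b * z = 0 := by
    intro z hz hfz
    have hcosz : Real.cos z ≠ 0 := by
      have h1 : z - (n : ℝ) * Real.pi ∈ Ioo (-(Real.pi / 2)) (Real.pi / 2) :=
        ⟨by linarith [hz.1], by linarith [hz.2, Real.pi_pos]⟩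
      have hpos : 0 < Real.cos (z - (n : ℝ) * Real.pi) := Real.cos_pos_of_mem_Ioo h1
      rw [Real.cos_sub_nat_mul_pi] at hpos
      intro h; rw [h, mul_zero] at hpos; exact lt_irrefl 0 hpos
    rw [Real.tan_eq_sin_div_cos]
    field_simp
    linarith [hfz]
  -- strict monotonicity of z ↦ a tan z + b z on the interval
  have hmono : ∀ u v : ℝ, u ∈ Ioo ((n : ℝ) * Real.pi - Real.pi / 2) ((n : ℝ) * Real.pi) →
      v ∈ Ioo ((n : ℝ) * Real.pi - Real.pi / 2) ((n : ℝ) * Real.pi) → u < v →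
      a * Real.tan u + b * u < a * Real.tan v + b * v := by
    intro u v hu hv huv
    have hu' : u - (n : ℝ) * Real.pi ∈ Ioo (-(Real.pi / 2)) (Real.pi / 2) :=
      ⟨by linarith [hu.1], by linarith [hu.2, Real.pi_pos]⟩
    have hv' : v - (n : ℝ) * Real.pi ∈ Ioo (-(Real.pi / 2)) (Real.pi / 2) :=
      ⟨by linarith [hv.1], by linarith [hv.2, Real.pi_pos]⟩
    have htan : Real.tan (u - (n : ℝ) * Real.pi) < Real.tan (v - (n : ℝ) * Real.pi) :=
      Real.strictMonoOn_tan hu' hv' (by linarith)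
    rw [Real.tan_sub_nat_mul_pi, Real.tan_sub_nat_mul_pi] at htan
    nlinarith
  have hgx := key x hx hfx
  have hgy := key y hy hfy
  rcases lt_trichotomy x y with h | h | h
  · exact absurd (hmono x y hx hy h) (by rw [hgx, hgy]; exact lt_irrefl 0)
  · exact h
  · exact absurd (hmono y x hy hx h) (by rw [hgx, hgy]; exact lt_irrefl 0)

/-- in the case θσ₀² < σ² (with σ₀ > 0), each interval
(nπ/T − π/(2T), nπ/T), n ≥ 1, contains exactly one solution of the
transcendental equation, every positive solution lies in such an interval, and
consequently the positive solutions form a strictly increasing sequence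
(w_n)_{n≥1} with w_n ∈ (nπ/T − π/(2T), nπ/T). -/
theorem ou_bridge_KL_frequencies_case_b
    (T σ σ₀ θ : ℝ) (hT : 0 < T) (hσ : 0 < σ) (hσ₀ : 0 < σ₀)
    (hcase : θ*σ₀^2 < σ^2) :
    (∀ n : ℕ, 1 ≤ n → ∃! w : ℝ,
        w ∈ Ioo ((n*Real.pi)/T - Real.pi/(2*T)) ((n*Real.pi)/T) ∧
        (σ^2 - θ*σ₀^2) * Real.sin (w*T) = -(w * σ₀^2 * Real.cos (w*T))) ∧
    (∀ w : ℝ, 0 < w →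
      (σ^2 - θ*σ₀^2) * Real.sin (w*T) = -(w * σ₀^2 * Real.cos (w*T)) →
      ∃ n : ℕ, 1 ≤ n ∧ w ∈ Ioo ((n*Real.pi)/T - Real.pi/(2*T)) ((n*Real.pi)/T)) ∧
    (∃ wseq : ℕ → ℝ,
      (∀ n m : ℕ, 1 ≤ n → n < m → wseq n < wseq m) ∧
      (∀ n : ℕ, 1 ≤ n →
        wseq n ∈ Ioo ((n*Real.pi)/T - Real.pi/(2*T)) ((n*Real.pi)/T) ∧
        (σ^2 - θ*σ₀^2) * Real.sin (wseq n * T) = -(wseq n * σ₀^2 * Real.cos (wseq n * T))) ∧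
      (∀ w : ℝ, 0 < w →
        (σ^2 - θ*σ₀^2) * Real.sin (w*T) = -(w * σ₀^2 * Real.cos (w*T)) →
        ∃ n : ℕ, 1 ≤ n ∧ w = wseq n)) := by
  have hA : 0 < σ^2 - θ*σ₀^2 := sub_pos.mpr hcase
  set a : ℝ := (σ^2 - θ*σ₀^2) * T with ha_def
  set b : ℝ := σ₀^2 with hb_def
  have ha : 0 < a := mul_pos hA hT
  have hb : 0 < b := by positivity
  -- equation equivalence
  have heq : ∀ w : ℝ,
      ((σ^2 - θ*σ₀^2) * Real.sin (w*T) = -(w * σ₀^2 * Real.cos (w*T))) ↔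
      a * Real.sin (w*T) + b * (w*T) * Real.cos (w*T) = 0 := by
    intro w
    constructor
    · intro h
      simp only [ha_def, hb_def]
      linear_combination T * h
    · intro h
      have h3 : T * ((σ^2 - θ*σ₀^2) * Real.sin (w*T) + w * σ₀^2 * Real.cos (w*T)) = 0 := by
        simp only [ha_def, hb_def] at h
        linear_combination h
      have h4 := (mul_eq_zero.mp h3).resolve_left (ne_of_gt hT)
      linarith
  -- membership equivalence
  have hmemIff : ∀ (n : ℕ) (w : ℝ),
      w ∈ Ioo ((n*Real.pi)/T - Real.pi/(2*T)) ((n*Real.pi)/T) ↔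
      w*T ∈ Ioo ((n : ℝ)*Real.pi - Real.pi/2) ((n : ℝ)*Real.pi) := by
    intro n w
    rw [show (n*Real.pi)/T - Real.pi/(2*T) = ((n : ℝ)*Real.pi - Real.pi/2)/T by ring,
      mem_Ioo, mem_Ioo, div_lt_iff₀ hT, lt_div_iff₀ hT]
  -- Part 1: existence and uniqueness in each interval
  have part1 : ∀ n : ℕ, 1 ≤ n → ∃! w : ℝ,
      w ∈ Ioo ((n*Real.pi)/T - Real.pi/(2*T)) ((n*Real.pi)/T) ∧
      (σ^2 - θ*σ₀^2) * Real.sin (w*T) = -(w * σ₀^2 * Real.cos (w*T)) := by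
    intro n hn
    obtain ⟨x, hxI, hxf⟩ := ou_aux_exists a b ha hb n hn
    have hwT : (x / T) * T = x := div_mul_cancel₀ x (ne_of_gt hT)
    refine ⟨x / T, ⟨?_, ?_⟩, ?_⟩
    · rw [hmemIff, hwT]; exact hxI
    · rw [heq, hwT]; exact hxf
    · rintro y ⟨hyI, hyf⟩
      have hyI' := (hmemIff n y).mp hyI
      have hyf' := (heq y).mp hyf
      have := ou_aux_unique a b ha hb n (y*T) x hyI' hxI hyf' hxf
      have hyx : y * T = (x / T) * T := by rw [hwT]; exact this
      exact mul_right_cancel₀ (ne_of_gt hT) hyx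
  -- Part 2: every positive solution lies in one of the intervals
  have part2 : ∀ w : ℝ, 0 < w →
      (σ^2 - θ*σ₀^2) * Real.sin (w*T) = -(w * σ₀^2 * Real.cos (w*T)) →
      ∃ n : ℕ, 1 ≤ n ∧ w ∈ Ioo ((n*Real.pi)/T - Real.pi/(2*T)) ((n*Real.pi)/T) := by
    intro w hw hwf
    have hf : a * Real.sin (w*T) + b * (w*T) * Real.cos (w*T) = 0 := (heq w).mp hwf
    set x : ℝ := w * T with hx_def
    have hx : 0 < x := mul_pos hw hT
    set n : ℕ := ⌈x / Real.pi⌉₊ with hn_def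
    have hn : 1 ≤ n := by
      rw [hn_def, Nat.one_le_iff_ne_zero, ← Nat.pos_iff_ne_zero, Nat.ceil_pos]
      positivity
    have hle : x ≤ (n : ℝ) * Real.pi := by
      have := Nat.le_ceil (x / Real.pi)
      rw [← hn_def] at this
      calc x = (x / Real.pi) * Real.pi := by field_simp
        _ ≤ (n : ℝ) * Real.pi := by nlinarith [Real.pi_pos]
    have hgt : ((n : ℝ) - 1) * Real.pi < x := by
      have h1 : (n : ℝ) < x / Real.pi + 1 := by
        have := Nat.ceil_lt_add_one (le_of_lt (show (0:ℝ) < x / Real.pi by positivity))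
        rw [← hn_def] at this
        exact this
      have h2 : (n : ℝ) - 1 < x / Real.pi := by linarith
      calc ((n : ℝ) - 1) * Real.pi < (x / Real.pi) * Real.pi := by
            nlinarith [Real.pi_pos]
        _ = x := by field_simp
    have hlt : x < (n : ℝ) * Real.pi := by
      rcases lt_or_eq_of_le hle with h | h
      · exact h
      · exfalso
        rw [h] at hf
        exact ou_aux_val_npi a b hb n hn hf
    have hhalf : (n : ℝ) * Real.pi - Real.pi / 2 < x := by
      rcases lt_trichotomy x ((n : ℝ) * Real.pi - Real.pi / 2) with h | h | h
      · exfalso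
        have hm : x ∈ Ioo (((n - 1 : ℕ) : ℝ) * Real.pi)
            (((n - 1 : ℕ) : ℝ) * Real.pi + Real.pi / 2) := by
          have hcast : ((n - 1 : ℕ) : ℝ) = (n : ℝ) - 1 := by
            have : (1 : ℕ) ≤ n := hn
            push_cast [Nat.cast_sub this]
            ring
          rw [hcast]
          constructor
          · exact hgt
          · calc x < (n : ℝ) * Real.pi - Real.pi / 2 := h
              _ = ((n : ℝ) - 1) * Real.pi + Real.pi / 2 := by ring
        exact ou_aux_ne_zero_right a b ha hb (n - 1) x hm hf
      · exfalso
        rw [h] at hf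
        exact ou_aux_val_half a b ha n hf
      · exact h
    exact ⟨n, hn, (hmemIff n w).mpr ⟨hhalf, hlt⟩⟩
  refine ⟨part1, part2, ?_⟩
  -- Part 3: the sequence
  classical
  set wseq : ℕ → ℝ := fun n => if h : 1 ≤ n then (part1 n h).choose else 0 with hwseq
  have hwseq_spec : ∀ n : ℕ, (h : 1 ≤ n) →
      (wseq n ∈ Ioo ((n*Real.pi)/T - Real.pi/(2*T)) ((n*Real.pi)/T) ∧
       (σ^2 - θ*σ₀^2) * Real.sin (wseq n * T) = -(wseq n * σ₀^2 * Real.cos (wseq n * T))) := by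
    intro n h
    have : wseq n = (part1 n h).choose := by rw [hwseq]; simp [h]
    rw [this]
    exact (part1 n h).choose_spec.1
  have hwseq_uniq : ∀ n : ℕ, (h : 1 ≤ n) → ∀ y : ℝ,
      (y ∈ Ioo ((n*Real.pi)/T - Real.pi/(2*T)) ((n*Real.pi)/T) ∧
       (σ^2 - θ*σ₀^2) * Real.sin (y*T) = -(y * σ₀^2 * Real.cos (y*T))) → y = wseq n := by
    intro n h y hy
    have : wseq n = (part1 n h).choose := by rw [hwseq]; simp [h]
    rw [this]
    exact (part1 n h).choose_spec.2 y hy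
  refine ⟨wseq, ?_, fun n hn => hwseq_spec n hn, ?_⟩
  · intro n m hn hnm
    have hm : 1 ≤ m := le_trans hn (le_of_lt hnm)
    have h1 := (hwseq_spec n hn).1
    have h2 := (hwseq_spec m hm).1
    have hcast : (n : ℝ) + 1 ≤ (m : ℝ) := by exact_mod_cast hnm
    have hmid : (n*Real.pi)/T ≤ (m*Real.pi)/T - Real.pi/(2*T) := by
      rw [show (m*Real.pi)/T - Real.pi/(2*T) = ((m : ℝ)*Real.pi - Real.pi/2)/T by ring,
        div_le_div_iff₀ hT hT]
      have hpi : (n : ℝ) * Real.pi ≤ (m : ℝ) * Real.pi - Real.pi / 2 := by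
        nlinarith [Real.pi_pos]
      exact mul_le_mul_of_nonneg_right hpi hT.le
    calc wseq n < (n*Real.pi)/T := h1.2
      _ ≤ (m*Real.pi)/T - Real.pi/(2*T) := hmid
      _ < wseq m := h2.1
  · intro w hw hwf
    obtain ⟨n, hn, hmem⟩ := part2 w hw hwf
    exact ⟨n, hn, hwseq_uniq n hn w ⟨hmem, hwf⟩⟩
end

section
/- Fix T > 0, σ > 0, σ₀ > 0 and θ ∈ ℝ with θσ₀² > σ². Consider the equation (σ² − θσ₀²) sin(wT) = −w σ₀² cos(wT), equivalently (θσ₀² − σ²) tan(wT) = σ₀² w. Then: (i) for every integer k ≥ 1 there is exactly one solution in the open interval (kπ/T, kπ/T + π/(2T)); (ii) there is no solution in [kπ/T + π/(2T), (k+1)π/T] for any k ≥ 1 (other than possible points where cos(wT)=0, which are never solutions here); (iii) there exists a solution in the interval (0, π/(2T)) if and only if T(θσ₀² − σ²) < σ₀², and in that case it is unique. -/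
open Real Set

private lemma ou_sin_ne_zero {x : ℝ} (k : ℕ) (h1 : (k : ℝ) * Real.pi < x)
    (h2 : x < (k : ℝ) * Real.pi + Real.pi / 2) : Real.sin x ≠ 0 := by
  intro h
  obtain ⟨n, hn⟩ := Real.sin_eq_zero_iff.mp h
  rw [← hn] at h1 h2
  have pi_pos := Real.pi_pos
  have hkn : ((k : ℤ) : ℝ) < (n : ℝ) := by
    have := (mul_lt_mul_iff_of_pos_right pi_pos).mp h1
    exact_mod_cast this
  have hnk : (n : ℝ) < ((k : ℤ) : ℝ) + 1 := by
    have h3 : (n : ℝ) * π < (((k : ℤ) : ℝ) + 1) * π := by push_cast; nlinarith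
    exact (mul_lt_mul_iff_of_pos_right pi_pos).mp h3
  have h4 : (k : ℤ) < n := by exact_mod_cast hkn
  have h5 : (n : ℤ) < (k : ℤ) + 1 := by exact_mod_cast hnk
  omega

/-- Key uniqueness lemma: on a convex set where `w > 0` and `sin (w T) ≠ 0`,
the equation `a sin(wT) = b w cos(wT)` has at most one solution, because
`w ↦ w cos(wT) / sin(wT)` is strictly decreasing there. -/
private lemma ou_aux_uniq (a b T : ℝ) (ha : 0 < a) (hb : 0 < b) (hT : 0 < T)
    (s : Set ℝ) (hconv : Convex ℝ s)
    (hs : ∀ w ∈ s, 0 < w ∧ Real.sin (w * T) ≠ 0)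
    {w1 w2 : ℝ} (h1 : w1 ∈ s) (h2 : w2 ∈ s)
    (e1 : a * Real.sin (w1 * T) = b * w1 * Real.cos (w1 * T))
    (e2 : a * Real.sin (w2 * T) = b * w2 * Real.cos (w2 * T)) : w1 = w2 := by
  have hder : ∀ x ∈ s, HasDerivAt (fun w : ℝ => w * Real.cos (w * T) / Real.sin (w * T))
      ((Real.sin (x * T) * Real.cos (x * T) - x * T) / (Real.sin (x * T)) ^ 2) x := by
    intro x hx
    obtain ⟨hx0, hxs⟩ := hs x hx
    have hxT : HasDerivAt (fun w : ℝ => w * T) T x := by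
      simpa using (hasDerivAt_id x).mul_const T
    have hcos : HasDerivAt (fun w : ℝ => Real.cos (w * T)) (-Real.sin (x * T) * T) x :=
      ((Real.hasDerivAt_cos (x * T)).comp x hxT :)
    have hsin : HasDerivAt (fun w : ℝ => Real.sin (w * T)) (Real.cos (x * T) * T) x :=
      ((Real.hasDerivAt_sin (x * T)).comp x hxT :)
    have hnum : HasDerivAt (fun w : ℝ => w * Real.cos (w * T))
        (1 * Real.cos (x * T) + x * (-Real.sin (x * T) * T)) x := (hasDerivAt_id x).mul hcos
    have h := hnum.div hsin hxs
    refine h.congr_deriv (Eq.symm ?_)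
    congr 1
    have hp := Real.sin_sq_add_cos_sq (x * T)
    linear_combination (x * T) * hp
  have hanti : StrictAntiOn (fun w : ℝ => w * Real.cos (w * T) / Real.sin (w * T)) s := by
    apply strictAntiOn_of_deriv_neg hconv
    · exact fun x hx => ((hder x hx).continuousAt).continuousWithinAt
    · intro x hx
      have hx' := interior_subset hx
      obtain ⟨hx0, hxs⟩ := hs x hx'
      rw [(hder x hx').deriv]
      apply div_neg_of_neg_of_pos
      · have hxT0 : 0 < x * T := mul_pos hx0 hT
        have h2x : Real.sin (2 * (x * T)) < 2 * (x * T) := Real.sin_lt (by linarith)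
        rw [Real.sin_two_mul] at h2x
        nlinarith
      · exact lt_of_le_of_ne (sq_nonneg _) (Ne.symm (pow_ne_zero 2 hxs))
  have key : ∀ w ∈ s, a * Real.sin (w * T) = b * w * Real.cos (w * T) →
      w * Real.cos (w * T) / Real.sin (w * T) = a / b := by
    intro w hw he
    obtain ⟨hw0, hws⟩ := hs w hw
    have hbne : b ≠ 0 := hb.ne'
    field_simp
    first
    | linear_combination he
    | linear_combination -he
  exact hanti.injOn h1 h2 (by rw [key w1 h1 e1, key w2 h2 e2])

set_option maxHeartbeats 1000000 in
/-- in the case θσ₀² > σ² (with σ₀ > 0): (i) each interval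
(kπ/T, kπ/T + π/(2T)), k ≥ 1, contains exactly one solution of the
transcendental equation; (ii) there is no solution in
[kπ/T + π/(2T), (k+1)π/T] for k ≥ 1; (iii) there is a solution in
(0, π/(2T)) iff T(θσ₀² − σ²) < σ₀², and then it is unique. -/
theorem ou_bridge_KL_frequencies_case_c
    (T σ σ₀ θ : ℝ) (hT : 0 < T) (hσ : 0 < σ) (hσ₀ : 0 < σ₀)
    (hcase : σ^2 < θ*σ₀^2) :
    (∀ k : ℕ, 1 ≤ k → ∃! w : ℝ,
        w ∈ Ioo ((k*Real.pi)/T) ((k*Real.pi)/T + Real.pi/(2*T)) ∧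
        (σ^2 - θ*σ₀^2) * Real.sin (w*T) = -(w * σ₀^2 * Real.cos (w*T))) ∧
    (∀ k : ℕ, 1 ≤ k → ∀ w ∈ Icc ((k*Real.pi)/T + Real.pi/(2*T)) (((k+1)*Real.pi)/T),
        ¬ ((σ^2 - θ*σ₀^2) * Real.sin (w*T) = -(w * σ₀^2 * Real.cos (w*T)))) ∧
    ((∃ w ∈ Ioo (0:ℝ) (Real.pi/(2*T)),
        (σ^2 - θ*σ₀^2) * Real.sin (w*T) = -(w * σ₀^2 * Real.cos (w*T)))
      ↔ T*(θ*σ₀^2 - σ^2) < σ₀^2) ∧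
    (T*(θ*σ₀^2 - σ^2) < σ₀^2 → ∃! w : ℝ,
        w ∈ Ioo (0:ℝ) (Real.pi/(2*T)) ∧
        (σ^2 - θ*σ₀^2) * Real.sin (w*T) = -(w * σ₀^2 * Real.cos (w*T))) := by
  have pi_pos := Real.pi_pos
  set a : ℝ := θ*σ₀^2 - σ^2 with ha_def
  set b : ℝ := σ₀^2 with hb_def
  have ha : 0 < a := by simp only [ha_def]; linarith
  have hb : 0 < b := by simp only [hb_def]; positivity
  -- equation equivalence
  have heqv : ∀ w : ℝ, ((σ^2 - θ*σ₀^2) * Real.sin (w*T) = -(w * σ₀^2 * Real.cos (w*T))) ↔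
      a * Real.sin (w*T) = b * w * Real.cos (w*T) := by
    intro w
    simp only [ha_def, hb_def]
    constructor <;> intro h <;> linear_combination -h
  -- Part (i)
  have part1 : ∀ k : ℕ, 1 ≤ k → ∃! w : ℝ,
      w ∈ Ioo ((k*Real.pi)/T) ((k*Real.pi)/T + Real.pi/(2*T)) ∧
      (σ^2 - θ*σ₀^2) * Real.sin (w*T) = -(w * σ₀^2 * Real.cos (w*T)) := by
    intro k hk
    set L : ℝ := (k*Real.pi)/T with hL_def
    set R : ℝ := (k*Real.pi)/T + Real.pi/(2*T) with hR_def
    have hk1 : (1:ℝ) ≤ (k:ℝ) := by exact_mod_cast hk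
    have hL0 : 0 < L := by
      simp only [hL_def]
      apply div_pos (mul_pos (by linarith) pi_pos) hT
    have hLT : L * T = (k:ℝ) * π := by simp only [hL_def]; field_simp
    have hRT : R * T = π/2 + (k:ℝ) * π := by simp only [hR_def]; field_simp; ring
    have hLR : L ≤ R := by
      have h0 : 0 < Real.pi/(2*T) := by positivity
      simp only [hR_def, hL_def]; linarith
    have hsq : ((-1:ℝ)^k) * ((-1:ℝ)^k) = 1 := by
      rw [← pow_add]
      exact Even.neg_one_pow ⟨k, rfl⟩
    have hck : Real.cos ((k:ℝ) * π) = (-1:ℝ)^k := by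
      simpa using Real.cos_add_nat_mul_pi 0 k
    set g : ℝ → ℝ := fun w => (-1:ℝ)^k * (a * Real.sin (w*T) - b*w*Real.cos (w*T)) with hg_def
    have hgL : g L = -(b*L) := by
      simp only [hg_def, hLT, Real.sin_nat_mul_pi, hck]
      linear_combination (-(b*L)) * hsq
    have hgR : g R = a := by
      simp only [hg_def, hRT, Real.sin_add_nat_mul_pi, Real.cos_add_nat_mul_pi,
        Real.sin_pi_div_two, Real.cos_pi_div_two]
      linear_combination a * hsq
    have hcont : ContinuousOn g (Icc L R) := by
      apply Continuous.continuousOn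
      simp only [hg_def]
      fun_prop
    have hmem : (0:ℝ) ∈ Ioo (g L) (g R) := by
      rw [hgL, hgR]
      exact ⟨by nlinarith [mul_pos hb hL0], ha⟩
    obtain ⟨w, hwmem, hgw⟩ := intermediate_value_Ioo hLR hcont hmem
    have hwe : a * Real.sin (w*T) = b * w * Real.cos (w*T) := by
      have hne : ((-1:ℝ)^k) ≠ 0 := pow_ne_zero _ (by norm_num)
      simp only [hg_def] at hgw
      have h0 : a * Real.sin (w*T) - b*w*Real.cos (w*T) = 0 := by
        rcases mul_eq_zero.mp hgw with h | h
        · exact absurd h hne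
        · exact h
      linarith
    have hsub : ∀ x ∈ Ioo L R, 0 < x ∧ Real.sin (x*T) ≠ 0 := by
      intro x hx
      refine ⟨lt_trans hL0 hx.1, ?_⟩
      apply ou_sin_ne_zero k
      · rw [← hLT]; exact (mul_lt_mul_iff_of_pos_right hT).mpr hx.1
      · have h2 := (mul_lt_mul_iff_of_pos_right hT).mpr hx.2
        rw [hRT] at h2; linarith
    refine ⟨w, ⟨hwmem, (heqv w).mpr hwe⟩, ?_⟩
    intro y hy
    exact ou_aux_uniq a b T ha hb hT (Ioo L R) (convex_Ioo L R) hsub hy.1 hwmem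
      ((heqv y).mp hy.2) hwe
  -- Part (ii)
  have part2 : ∀ k : ℕ, 1 ≤ k →
      ∀ w ∈ Icc ((k*Real.pi)/T + Real.pi/(2*T)) (((k+1)*Real.pi)/T),
      ¬ ((σ^2 - θ*σ₀^2) * Real.sin (w*T) = -(w * σ₀^2 * Real.cos (w*T))) := by
    intro k hk w hw heq
    have he : a * Real.sin (w*T) = b * w * Real.cos (w*T) := (heqv w).mp heq
    have hk1 : (1:ℝ) ≤ (k:ℝ) := by exact_mod_cast hk
    have hL0 : 0 < (k*Real.pi)/T + Real.pi/(2*T) := by positivity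
    have hw0 : 0 < w := lt_of_lt_of_le hL0 hw.1
    have hxlo : π/2 + (k:ℝ)*π ≤ w*T := by
      have h2 := mul_le_mul_of_nonneg_right hw.1 hT.le
      have h1 : ((k*Real.pi)/T + Real.pi/(2*T)) * T = π/2 + (k:ℝ)*π := by field_simp; ring
      rw [h1] at h2; exact h2
    have hxhi : w*T ≤ (k:ℝ)*π + π := by
      have h2 := mul_le_mul_of_nonneg_right hw.2 hT.le
      have h1 : (((k:ℝ)+1)*Real.pi)/T * T = (k:ℝ)*π + π := by field_simp
      rw [h1] at h2; exact h2
    have hx : w*T = (w*T - (k:ℝ)*π) + (k:ℝ)*π := by ring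
    rw [hx, Real.sin_add_nat_mul_pi, Real.cos_add_nat_mul_pi] at he
    have hy1 : π/2 ≤ w*T - (k:ℝ)*π := by linarith
    have hy2 : w*T - (k:ℝ)*π ≤ π := by linarith
    have he2 : a * Real.sin (w*T - (k:ℝ)*π) = b * w * Real.cos (w*T - (k:ℝ)*π) := by
      rcases neg_one_pow_eq_or ℝ k with h | h <;> rw [h] at he <;> linarith
    have hcy : Real.cos (w*T - (k:ℝ)*π) ≤ 0 :=
      Real.cos_nonpos_of_pi_div_two_le_of_le hy1 (by linarith)
    rcases lt_or_eq_of_le hy2 with h | h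
    · have hsy : 0 < Real.sin (w*T - (k:ℝ)*π) :=
        Real.sin_pos_of_pos_of_lt_pi (by linarith) h
      have hp1 : 0 < a * Real.sin (w*T - (k:ℝ)*π) := mul_pos ha hsy
      have hp2 : b * w * Real.cos (w*T - (k:ℝ)*π) ≤ 0 :=
        mul_nonpos_of_nonneg_of_nonpos (mul_pos hb hw0).le hcy
      linarith
    · rw [h, Real.sin_pi, Real.cos_pi] at he2
      nlinarith [mul_pos hb hw0]
  -- Part (iv)
  have part4 : T*(θ*σ₀^2 - σ^2) < σ₀^2 → ∃! w : ℝ,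
      w ∈ Ioo (0:ℝ) (Real.pi/(2*T)) ∧
      (σ^2 - θ*σ₀^2) * Real.sin (w*T) = -(w * σ₀^2 * Real.cos (w*T)) := by
    intro hcond
    have hab : a * T < b := by simp only [ha_def, hb_def]; linarith
    set q : ℝ := a*T/b with hq_def
    have hq0 : 0 < q := by simp only [hq_def]; positivity
    have hq1 : q < 1 := (div_lt_one hb).mpr hab
    set r : ℝ := Real.arccos q with hr_def
    have hr0 : 0 < r := Real.arccos_pos.mpr hq1
    have hrlt : r < π/2 := Real.arccos_lt_pi_div_two.mpr hq0
    have hrpi : r ≤ π := Real.arccos_le_pi q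
    have hcr : Real.cos r = q := Real.cos_arccos (by linarith) hq1.le
    set W : ℝ := r/(2*T) with hW_def
    set R0 : ℝ := Real.pi/(2*T) with hR0_def
    have hW0 : 0 < W := by simp only [hW_def]; positivity
    have hWT : W * T = r/2 := by simp only [hW_def]; field_simp
    have hR0T : R0 * T = π/2 := by simp only [hR0_def]; field_simp
    have hWR : W ≤ R0 := by
      simp only [hW_def, hR0_def]
      gcongr
    set f : ℝ → ℝ := fun w => a * Real.sin (w*T) - b*w*Real.cos (w*T) with hf_def
    have hcosW : q < Real.cos (r/2) := by
      have h := Real.cos_lt_cos_of_nonneg_of_le_pi (by linarith : (0:ℝ) ≤ r/2) hrpi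
        (by linarith : r/2 < r)
      rw [hcr] at h; exact h
    have hfW : f W < 0 := by
      simp only [hf_def, hWT]
      have hs : Real.sin (r/2) < r/2 := Real.sin_lt (by linarith)
      have h1 : a * (r/2) = b*q*W := by
        simp only [hq_def, hW_def]; field_simp
      have s1 : a * Real.sin (r/2) < a * (r/2) := by
        exact mul_lt_mul_of_pos_left hs ha
      have s2 : b*q*W < b*Real.cos (r/2)*W :=
        mul_lt_mul_of_pos_right (mul_lt_mul_of_pos_left hcosW hb) hW0
      linarith
    have hfR0 : f R0 = a := by
      simp only [hf_def, hR0T, Real.sin_pi_div_two, Real.cos_pi_div_two]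
      ring
    have hcont : ContinuousOn f (Icc W R0) := by
      apply Continuous.continuousOn
      simp only [hf_def]
      fun_prop
    have hmem : (0:ℝ) ∈ Ioo (f W) (f R0) := by rw [hfR0]; exact ⟨hfW, ha⟩
    obtain ⟨w, hwmem, hfw⟩ := intermediate_value_Ioo hWR hcont hmem
    have hwIoo : w ∈ Ioo (0:ℝ) R0 := ⟨lt_trans hW0 hwmem.1, hwmem.2⟩
    have hwe : a * Real.sin (w*T) = b * w * Real.cos (w*T) := by
      simp only [hf_def] at hfw; linarith
    have hsub : ∀ x ∈ Ioo (0:ℝ) R0, 0 < x ∧ Real.sin (x*T) ≠ 0 := by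
      intro x hx
      refine ⟨hx.1, ne_of_gt (Real.sin_pos_of_pos_of_lt_pi (mul_pos hx.1 hT) ?_)⟩
      have h2 := (mul_lt_mul_iff_of_pos_right hT).mpr hx.2
      rw [hR0T] at h2; linarith
    refine ⟨w, ⟨hwIoo, (heqv w).mpr hwe⟩, ?_⟩
    intro y hy
    exact ou_aux_uniq a b T ha hb hT (Ioo 0 R0) (convex_Ioo 0 R0) hsub hy.1 hwIoo
      ((heqv y).mp hy.2) hwe
  -- Part (iii)
  have part3 : (∃ w ∈ Ioo (0:ℝ) (Real.pi/(2*T)),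
      (σ^2 - θ*σ₀^2) * Real.sin (w*T) = -(w * σ₀^2 * Real.cos (w*T)))
      ↔ T*(θ*σ₀^2 - σ^2) < σ₀^2 := by
    constructor
    · rintro ⟨w, hw, heq⟩
      have he : a * Real.sin (w*T) = b * w * Real.cos (w*T) := (heqv w).mp heq
      have hx0 : 0 < w*T := mul_pos hw.1 hT
      have hx2 : w*T < π/2 := by
        have h2 := (mul_lt_mul_iff_of_pos_right hT).mpr hw.2
        have h1 : (Real.pi/(2*T))*T = π/2 := by field_simp
        rw [h1] at h2; exact h2
      have hsin : 0 < Real.sin (w*T) := Real.sin_pos_of_pos_of_lt_pi hx0 (by linarith)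
      have hcos : 0 < Real.cos (w*T) := Real.cos_pos_of_mem_Ioo ⟨by linarith, hx2⟩
      have htan := Real.lt_tan hx0 hx2
      rw [Real.tan_eq_sin_div_cos] at htan
      have h1 : (w*T) * Real.cos (w*T) < Real.sin (w*T) := (lt_div_iff₀ hcos).mp htan
      have h2 : a*T*Real.sin (w*T) = b*((w*T)*Real.cos (w*T)) := by linear_combination T*he
      have h3 : a*T < b := by nlinarith
      simp only [ha_def, hb_def] at h3
      linarith
    · intro h
      obtain ⟨w, hw, _⟩ := part4 h
      exact ⟨w, hw.1, hw.2⟩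
  exact ⟨part1, part2, part3, part4⟩
end
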